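/- Let G be an n-player Büchi game on a possibly infinite arena, where player i's objective is Büchi(T_i) for a set T_i ⊆ V, and let σ' be a Nash equilibrium from a vertex v_0 such that some vertex occurs infinitely often in out(σ', v_0). Then there exists a Nash equilibrium σ from v_0 in which every strategy is finite-memory and such that Sat(out(σ, v_0)) = Sat(out(σ', v_0)). Moreover, if the arena is finite, the strategies of σ can be taken with memory size at most |V| + n² + n. -/

import Mathlib

open scoped ENNReal Classical

/-- An `n`-player arena on a (possibly infinite) directed graph: an edge relation
with no deadlocks, together with an assignment of each vertex to its owner. -/
structure Arena (V : Type) (n : ℕ) where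
  E : V → V → Prop
  owner : V → Fin n
  no_deadlock : ∀ v, ∃ v', E v v'

namespace Arena

variable {V : Type} {n : ℕ}

/-- A play: an infinite sequence of vertices following edges. -/
def IsPlay (A : Arena V n) (π : ℕ → V) : Prop := ∀ j, A.E (π j) (π (j + 1))

/-- A strategy: given the past history (the earlier vertices, oldest first) and the
current vertex, pick an `E`-successor of the current vertex. -/
structure Strategy (A : Arena V n) where
  next : List V → V → V
  valid : ∀ h v, A.E v (next h v)

/-- The list of the first `j` vertices of a play. -/
def pref (π : ℕ → V) (j : ℕ) : List V := (List.range j).map π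

/-- A play is consistent with the strategy `σ` used by player `i`. -/
def Consistent (A : Arena V n) (i : Fin n) (σ : A.Strategy) (π : ℕ → V) : Prop :=
  ∀ j, A.owner (π j) = i → π (j + 1) = σ.next (pref π j) (π j)

/-- A memoryless strategy only depends on the current vertex. -/
def Memoryless {A : Arena V n} (σ : A.Strategy) : Prop :=
  ∀ h h' v, σ.next h v = σ.next h' v

def outcomeAux (A : Arena V n) (σ : Fin n → A.Strategy) (v0 : V) : ℕ → List V × V
  | 0 => ([], v0)
  | j + 1 =>
      let p := outcomeAux A σ v0 j
      (p.1 ++ [p.2], (σ (A.owner p.2)).next p.1 p.2)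

/-- The outcome of the strategy profile `σ` from `v0`: the unique play from `v0`
consistent with every strategy of the profile. -/
def outcome (A : Arena V n) (σ : Fin n → A.Strategy) (v0 : V) (j : ℕ) : V :=
  (outcomeAux A σ v0 j).2

/-- Reachability objective: visit `T`. -/
def ReachObj (T : Set V) : Set (ℕ → V) := {π | ∃ j, π j ∈ T}

/-- Safety objective: never visit `T`. -/
def SafeObj (T : Set V) : Set (ℕ → V) := {π | ∀ j, π j ∉ T}

/-- Büchi objective: visit `T` infinitely often. -/
def BuchiObj (T : Set V) : Set (ℕ → V) := {π | ∀ j, ∃ k, j ≤ k ∧ π k ∈ T}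

/-- co-Büchi objective: visit `T` only finitely often. -/
def CoBuchiObj (T : Set V) : Set (ℕ → V) := {π | ∃ j, ∀ k, j ≤ k → π k ∉ T}

/-- Shortest-path cost of a play: the total weight up to the first visit of `T`,
and `⊤` if `T` is never visited. -/
noncomputable def spCost (w : V → V → ℕ) (T : Set V) (π : ℕ → V) : ℝ≥0∞ :=
  if ∃ k, π k ∈ T then
    (Finset.range (sInf {k | π k ∈ T})).sum fun j => (w (π j) (π (j + 1)) : ℝ≥0∞)
  else ⊤

/-- Winning region of player `p` (whose objective is `Ω`) in a two-player game:
vertices from which `p` has a strategy all of whose consistent plays lie in `Ω`. -/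
def WinRegion (A : Arena V 2) (p : Fin 2) (Ω : Set (ℕ → V)) : Set V :=
  {v | ∃ σ : A.Strategy, ∀ π, A.IsPlay π → π 0 = v → A.Consistent p σ π → π ∈ Ω}

/-- Lower value `inf_{σ₁} sup_{σ₂}` of a two-player zero-sum game with cost `c`
(minimised by player 1, maximised by player 2). -/
noncomputable def valIS (A : Arena V 2) (c : (ℕ → V) → ℝ≥0∞) (v : V) : ℝ≥0∞ :=
  ⨅ σ1 : A.Strategy, ⨆ σ2 : A.Strategy, c (outcome A ![σ1, σ2] v)

/-- Upper value `sup_{σ₂} inf_{σ₁}`. -/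
noncomputable def valSI (A : Arena V 2) (c : (ℕ → V) → ℝ≥0∞) (v : V) : ℝ≥0∞ :=
  ⨆ σ2 : A.Strategy, ⨅ σ1 : A.Strategy, c (outcome A ![σ1, σ2] v)

/-- Nash equilibrium from `v0` for cost functions (each player minimises):
no unilateral deviation decreases the deviator's cost. -/
def IsNECost (A : Arena V n) (cost : Fin n → (ℕ → V) → ℝ≥0∞)
    (σ : Fin n → A.Strategy) (v0 : V) : Prop :=
  ∀ (i : Fin n) (τ : A.Strategy),
    cost i (outcome A σ v0) ≤ cost i (outcome A (Function.update σ i τ) v0)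

/-- Nash equilibrium from `v0` for objectives: if a unilateral deviation of player `i`
satisfies `Ω i`, then so does the equilibrium outcome. -/
def IsNEObj (A : Arena V n) (Ω : Fin n → Set (ℕ → V))
    (σ : Fin n → A.Strategy) (v0 : V) : Prop :=
  ∀ (i : Fin n) (τ : A.Strategy),
    outcome A (Function.update σ i τ) v0 ∈ Ω i → outcome A σ v0 ∈ Ω i

/-- The coalition arena of player `i`: player `i` (as player `0`) against all others. -/
def coalition (A : Arena V n) (i : Fin n) : Arena V 2 where
  E := A.E
  owner := fun v => if A.owner v = i then 0 else 1
  no_deadlock := A.no_deadlock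

/-- Winning region of player `i` in their coalition game for objective `Ω`. -/
def coalWin (A : Arena V n) (i : Fin n) (Ω : Set (ℕ → V)) : Set V :=
  WinRegion (coalition A i) 0 Ω

/-- Value of a vertex in player `i`'s coalition game with cost `c`. -/
noncomputable def coalVal (A : Arena V n) (i : Fin n) (c : (ℕ → V) → ℝ≥0∞) (v : V) :
    ℝ≥0∞ :=
  valIS (coalition A i) c v

/-- Players whose reachability objective is satisfied by `π`. -/
def satReach (T : Fin n → Set V) (π : ℕ → V) : Set (Fin n) := {i | ∃ j, π j ∈ T i}

/-- Players whose safety objective is satisfied by `π`. -/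
def satSafe (T : Fin n → Set V) (π : ℕ → V) : Set (Fin n) := {i | ∀ j, π j ∉ T i}

/-- Players whose Büchi objective is satisfied by `π`. -/
def satBuchi (T : Fin n → Set V) (π : ℕ → V) : Set (Fin n) :=
  {i | ∀ j, ∃ k, j ≤ k ∧ π k ∈ T i}

/-- Players whose co-Büchi objective is satisfied by `π`. -/
def satCoBuchi (T : Fin n → Set V) (π : ℕ → V) : Set (Fin n) :=
  {i | ∃ j, ∀ k, j ≤ k → π k ∉ T i}

/-- Earliest positions at which the targets visited by `π` are first visited. -/
def visitSet (T : Fin n → Set V) (π : ℕ → V) : Set ℕ :=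
  {m | ∃ i, (∃ j, π j ∈ T i) ∧ m = sInf {j | π j ∈ T i}}

/-- A Mealy machine with memory states `M`. -/
structure Mealy (A : Arena V n) (M : Type) where
  init : M
  up : M → V → M
  nxt : M → V → V
  valid : ∀ m v, A.E v (nxt m v)

/-- The strategy `σ` is induced by the Mealy machine `mm`. -/
def InducedBy {A : Arena V n} {M : Type} (σ : A.Strategy) (mm : Mealy A M) : Prop :=
  ∀ h v, σ.next h v = mm.nxt (h.foldl mm.up mm.init) v

/-- `σ` has memory size at most `b`. -/
def HasMemorySize {A : Arena V n} (σ : A.Strategy) (b : ℕ) : Prop :=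
  ∃ (M : Type) (mm : Mealy A M), Finite M ∧ Nat.card M ≤ b ∧ InducedBy σ mm

/-- `σ` is a finite-memory strategy. -/
def FiniteMemory {A : Arena V n} (σ : A.Strategy) : Prop :=
  ∃ (M : Type) (mm : Mealy A M), Finite M ∧ InducedBy σ mm

/-- The (finite) segment of `π` between positions `a` and `b` is a simple history. -/
def SimpleSeg (π : ℕ → V) (a b : ℕ) : Prop :=
  ∀ m m', a ≤ m → m ≤ b → a ≤ m' → m' ≤ b → π m = π m' → m = m'

/-- The suffix of `π` from position `a` is a simple play. -/
def SimplePlaySeg (π : ℕ → V) (a : ℕ) : Prop :=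
  ∀ m m', a ≤ m → a ≤ m' → π m = π m' → m = m'

/-- The suffix of `π` from position `a` is a simple lasso `p c^ω` with `p c`
a simple history. -/
def SimpleLassoSeg (π : ℕ → V) (a : ℕ) : Prop :=
  ∃ k ℓ, 0 < ℓ ∧ (∀ m, a + k ≤ m → π (m + ℓ) = π m) ∧
    ∀ m m', a ≤ m → m < a + k + ℓ → a ≤ m' → m' < a + k + ℓ → π m = π m' → m = m'

/-- The segment of `π` between positions `a` and `b` is a simple cycle. -/
def SimpleCycleSeg (π : ℕ → V) (a b : ℕ) : Prop :=
  a < b ∧ π b = π a ∧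
    ∀ m m', a ≤ m → m < b → a ≤ m' → m' < b → π m = π m' → m = m'

/-- Total weight of a history (a list of vertices). -/
def histWeight (w : V → V → ℕ) : List V → ℕ
  | [] => 0
  | [_] => 0
  | a :: b :: t => w a b + histWeight w (b :: t)

/-- The list of vertices along positions `a..b` (inclusive) of a play. -/
def segList (π : ℕ → V) (a b : ℕ) : List V :=
  (List.range (b - a + 1)).map fun m => π (a + m)

/-- The segment of `π` between positions `a` and `b` has minimal weight among all
histories that share its first and last vertex and traverse only its vertices. -/
def MinWeightSeg (A : Arena V n) (w : V → V → ℕ) (π : ℕ → V) (a b : ℕ) : Prop :=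
  ∀ h : List V, h ≠ [] → List.Chain' A.E h →
    h.head? = some (π a) → h.getLast? = some (π b) →
    (∀ x ∈ h, ∃ m, a ≤ m ∧ m ≤ b ∧ π m = x) →
    histWeight w (segList π a b) ≤ histWeight w h

/-- Given cut positions `p`, segments number `l` and `l'` of `π` carry the same
vertex sequence. -/
def SegEq (π : ℕ → V) (p : ℕ → ℕ) (l l' : ℕ) : Prop :=
  p (l' + 1) - p l' = p (l + 1) - p l ∧
    ∀ m, m ≤ p (l + 1) - p l → π (p l' + m) = π (p l + m)

/-- There is no cycle of the arena using only vertices of `S` and avoiding `avoid`. -/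
def NoCycleAvoid (A : Arena V n) (S : Set V) (avoid : V) : Prop :=
  ¬ ∃ (m : ℕ) (c : ℕ → V), 0 < m ∧ (∀ j, j < m → A.E (c j) (c (j + 1))) ∧
      c m = c 0 ∧ ∀ j, j ≤ m → c j ∈ S ∧ c j ≠ avoid

end Arena
namespace Arena

variable {V : Type} {n : ℕ}

theorem pref_succ (π : ℕ → V) (j : ℕ) : pref π (j + 1) = pref π j ++ [π j] := by
  simp [pref, List.range_succ]

theorem outcomeAux_fst (A : Arena V n) (σ : Fin n → A.Strategy) (v0 : V) :
    ∀ t, (outcomeAux A σ v0 t).1 = pref (outcome A σ v0) t := by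
  intro t
  induction t with
  | zero => simp [outcomeAux, pref]
  | succ t ih =>
    rw [pref_succ]
    show (outcomeAux A σ v0 t).1 ++ [(outcomeAux A σ v0 t).2] = _
    rw [ih]; rfl

theorem outcome_zero (A : Arena V n) (σ : Fin n → A.Strategy) (v0 : V) :
    outcome A σ v0 0 = v0 := rfl

theorem outcome_succ (A : Arena V n) (σ : Fin n → A.Strategy) (v0 : V) (t : ℕ) :
    outcome A σ v0 (t + 1) =
      (σ (A.owner (outcome A σ v0 t))).next (pref (outcome A σ v0) t)
        (outcome A σ v0 t) := by
  show (outcomeAux A σ v0 (t+1)).2 = _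
  rw [show (outcomeAux A σ v0 (t+1)).2
      = (σ (A.owner (outcomeAux A σ v0 t).2)).next (outcomeAux A σ v0 t).1
          (outcomeAux A σ v0 t).2 from rfl, outcomeAux_fst]
  rfl

theorem isPlay_outcome (A : Arena V n) (σ : Fin n → A.Strategy) (v0 : V) :
    A.IsPlay (outcome A σ v0) := by
  intro j
  rw [outcome_succ]
  exact (σ _).valid _ _

/-- Walk compression: from any finite walk we can extract an injective walk with the
same endpoints whose vertices all come from the original walk. -/
theorem compressWalk (A : Arena V n) :
    ∀ (len : ℕ) (w : ℕ → V), (∀ q, q < len → A.E (w q) (w (q + 1))) →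
    ∃ (b : ℕ) (pv : ℕ → V), b ≤ len ∧ pv 0 = w 0 ∧ pv b = w len ∧
      (∀ q, q < b → A.E (pv q) (pv (q + 1))) ∧
      (∀ q, q ≤ b → ∃ m, m ≤ len ∧ pv q = w m) ∧
      (∀ q q', q ≤ b → q' ≤ b → pv q = pv q' → q = q') := by
  intro len
  induction len using Nat.strong_induction_on with
  | _ len ih =>
    intro w he
    by_cases hdup : ∃ q q', q < q' ∧ q' ≤ len ∧ w q = w q'
    · obtain ⟨q, q', hqq, hq'len, heq⟩ := hdup
      set w' : ℕ → V := fun t => if t ≤ q then w t else w (t + (q' - q)) with hw'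
      have hlen' : len - (q' - q) < len := by omega
      have he' : ∀ t, t < len - (q' - q) → A.E (w' t) (w' (t + 1)) := by
        intro t ht
        by_cases h1 : t + 1 ≤ q
        · simp only [hw', if_pos (by omega : t ≤ q), if_pos h1]
          exact he t (by omega)
        · by_cases h2 : t ≤ q
          · -- t = q
            have htq : t = q := by omega
            simp only [hw', if_pos h2, if_neg h1]
            have : t + 1 + (q' - q) = q' + 1 := by omega
            rw [this, htq, heq]
            exact he q' (by omega)
          · simp only [hw', if_neg h2, if_neg h1]
            have : t + 1 + (q' - q) = t + (q' - q) + 1 := by omega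
            rw [this]
            exact he (t + (q' - q)) (by omega)
      obtain ⟨b, pv, hb, h0, hend, hedge, hsub, hinj⟩ := ih _ hlen' w' he'
      refine ⟨b, pv, by omega, ?_, ?_, hedge, ?_, hinj⟩
      · rw [h0]; simp [hw']
      · rw [hend]
        simp only [hw']
        by_cases h : len - (q' - q) ≤ q
        · rw [if_pos h]
          have : len - (q' - q) = q := by omega
          rw [this, heq]
          congr 1; omega
        · rw [if_neg h]; congr 1; omega
      · intro s hs
        obtain ⟨m, hm, hpv⟩ := hsub s hs
        simp only [hw'] at hpv
        by_cases h : m ≤ q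
        · exact ⟨m, by omega, by rwa [if_pos h] at hpv⟩
        · exact ⟨m + (q' - q), by omega, by rwa [if_neg h] at hpv⟩
    · push_neg at hdup
      refine ⟨len, w, le_refl _, rfl, rfl, he, fun q hq => ⟨q, hq, rfl⟩, ?_⟩
      intro q q' hq hq' heq
      rcases lt_trichotomy q q' with h | h | h
      · exact absurd heq (hdup q q' h hq')
      · exact h
      · exact absurd heq.symm (hdup q' q h hq)

end Arena
namespace Arena
namespace Punish

open OrderHom OrdinalApprox

variable {V : Type} {n : ℕ}

/-- Controlled predecessor for the coalition of all players except `i`. -/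
def cpre (A : Arena V n) (i : Fin n) (X : Set V) : Set V :=
  {v | (A.owner v ≠ i → ∃ w, A.E v w ∧ w ∈ X) ∧ (A.owner v = i → ∀ w, A.E v w → w ∈ X)}

theorem cpre_mono (A : Arena V n) (i : Fin n) {X Y : Set V} (hXY : X ≤ Y) :
    cpre A i X ≤ cpre A i Y := by
  intro v hv
  exact ⟨fun h => (hv.1 h).imp (fun w hw => ⟨hw.1, hXY hw.2⟩),
    fun h w hw => hXY (hv.2 h w hw)⟩

/-- Inner operator for the co-Büchi fixpoint. -/
def psiHom (A : Arena V n) (i : Fin n) (T : Set V) (X : Set V) : Set V →o Set V :=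
  ⟨fun Y => (T ∩ cpre A i X) ∪ (Tᶜ ∩ cpre A i Y), by
    intro Y Y' h
    exact Set.union_subset_union_right _ (Set.inter_subset_inter_right _ (cpre_mono A i h))⟩

theorem psiHom_mono_left (A : Arena V n) (i : Fin n) (T : Set V) {X X' : Set V}
    (h : X ≤ X') (Y : Set V) : psiHom A i T X Y ≤ psiHom A i T X' Y :=
  Set.union_subset_union_left _ (Set.inter_subset_inter_right _ (cpre_mono A i h))

/-- Outer operator. -/
def phi (A : Arena V n) (i : Fin n) (T : Set V) : Set V →o Set V :=
  ⟨fun X => gfp (psiHom A i T X), by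
    intro X X' h
    apply le_gfp
    calc gfp (psiHom A i T X) = psiHom A i T X (gfp (psiHom A i T X)) := (map_gfp _).symm
    _ ≤ psiHom A i T X' (gfp (psiHom A i T X)) := psiHom_mono_left A i T h _⟩

/-- The coalition's co-Büchi winning region (least fixpoint). -/
def Wwin (A : Arena V n) (i : Fin n) (T : Set V) : Set V := lfp (phi A i T)

section Fixed

variable (A : Arena V n) (i : Fin n) (T : Set V)

theorem phi_unfold (X : Set V) :
    phi A i T X = (T ∩ cpre A i X) ∪ (Tᶜ ∩ cpre A i (phi A i T X)) :=
  (map_gfp (psiHom A i T X)).symm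

theorem Wwin_fixed : phi A i T (Wwin A i T) = Wwin A i T := map_lfp _

noncomputable def Xap (b : Ordinal) : Set V := lfpApprox (phi A i T) ⊥ b

theorem Xap_le_W (b : Ordinal) : Xap A i T b ≤ Wwin A i T :=
  lfpApprox_le_of_mem_fixedPoints _ (map_lfp _) bot_le b

theorem mem_Xap_elim {w : V} {b : Ordinal} (hw : w ∈ Xap A i T b) :
    ∃ b' < b, w ∈ phi A i T (Xap A i T b') := by
  unfold Xap at hw
  rw [lfpApprox] at hw
  simp only [Set.bot_eq_empty, Set.sup_eq_union, Set.iSup_eq_iUnion, Set.mem_union,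
    Set.mem_iUnion, Set.mem_empty_iff_false, false_or] at hw
  obtain ⟨b', hb', hws⟩ := hw
  exact ⟨b', hb', hws⟩

noncomputable def rnk (v : V) : Ordinal := sInf {b | v ∈ phi A i T (Xap A i T b)}

theorem rnk_spec {v : V} (hv : v ∈ Wwin A i T) :
    v ∈ phi A i T (Xap A i T (rnk A i T v)) := by
  have hne : {b | v ∈ phi A i T (Xap A i T b)}.Nonempty := by
    refine ⟨(Order.succ (Cardinal.mk (Set V))).ord, ?_⟩
    show v ∈ phi A i T (lfpApprox (phi A i T) ⊥ _)
    rw [lfpApprox_ord_eq_lfp]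
    rw [show lfp (phi A i T) = Wwin A i T from rfl, Wwin_fixed]
    exact hv
  exact csInf_mem hne

theorem mem_W_of_phiXap {w : V} {b : Ordinal} (hw : w ∈ phi A i T (Xap A i T b)) :
    w ∈ Wwin A i T ∧ rnk A i T w ≤ b := by
  constructor
  · have : phi A i T (Xap A i T b) ≤ phi A i T (Wwin A i T) :=
      (phi A i T).monotone (Xap_le_W A i T b)
    rw [Wwin_fixed] at this
    exact this hw
  · exact csInf_le' hw

theorem mem_W_of_Xap {w : V} {b : Ordinal} (hw : w ∈ Xap A i T b) :
    w ∈ Wwin A i T ∧ rnk A i T w < b := by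
  obtain ⟨b', hb', hw'⟩ := mem_Xap_elim A i T hw
  obtain ⟨h1, h2⟩ := mem_W_of_phiXap A i T hw'
  exact ⟨h1, lt_of_le_of_lt h2 hb'⟩

/-- One-step property of the winning region. -/
theorem W_step {v : V} (hv : v ∈ Wwin A i T) :
    (v ∈ T → v ∈ cpre A i (Xap A i T (rnk A i T v))) ∧
    (v ∉ T → v ∈ cpre A i (phi A i T (Xap A i T (rnk A i T v)))) := by
  have h := rnk_spec A i T hv
  rw [phi_unfold] at h
  rcases h with h | h
  · exact ⟨fun _ => h.2, fun hT => absurd h.1 hT⟩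
  · exact ⟨fun hT => absurd hT h.1, fun _ => h.2⟩

/-- The positional punishment strategy against player `i`. -/
noncomputable def pstrat : V → V := fun v =>
  if h : v ∈ Wwin A i T ∧ A.owner v ≠ i then
    (if hT : v ∈ T then
      Classical.choose (((W_step A i T h.1).1 hT).1 h.2)
    else
      Classical.choose (((W_step A i T h.1).2 hT).1 h.2))
  else Classical.choose (A.no_deadlock v)

theorem pstrat_valid (v : V) : A.E v (pstrat A i T v) := by
  unfold pstrat
  split
  · next h =>
    split
    · next hT => exact (Classical.choose_spec (((W_step A i T h.1).1 hT).1 h.2)).1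
    · next hT => exact (Classical.choose_spec (((W_step A i T h.1).2 hT).1 h.2)).1
  · exact Classical.choose_spec (A.no_deadlock v)

/-- One-step soundness: any successor consistent with the punishment strategy stays
in the winning region and the rank does not increase (decreases on `T`). -/
theorem step_sound {v w : V} (hv : v ∈ Wwin A i T) (hE : A.E v w)
    (hfol : A.owner v ≠ i → w = pstrat A i T v) :
    w ∈ Wwin A i T ∧ (v ∈ T → rnk A i T w < rnk A i T v) ∧
      (v ∉ T → rnk A i T w ≤ rnk A i T v) := by
  by_cases hown : A.owner v = i
  · by_cases hT : v ∈ T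
    · have h := ((W_step A i T hv).1 hT).2 hown w hE
      obtain ⟨h1, h2⟩ := mem_W_of_Xap A i T h
      exact ⟨h1, fun _ => h2, fun h' => absurd hT h'⟩
    · have h := ((W_step A i T hv).2 hT).2 hown w hE
      obtain ⟨h1, h2⟩ := mem_W_of_phiXap A i T h
      exact ⟨h1, fun h' => absurd h' hT, fun _ => h2⟩
  · have hw := hfol hown
    subst hw
    unfold pstrat
    rw [dif_pos ⟨hv, hown⟩]
    by_cases hT : v ∈ T
    · rw [dif_pos hT]
      have h := (Classical.choose_spec (((W_step A i T hv).1 hT).1 hown)).2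
      obtain ⟨h1, h2⟩ := mem_W_of_Xap A i T h
      exact ⟨h1, fun _ => h2, fun h' => absurd hT h'⟩
    · rw [dif_neg hT]
      have h := (Classical.choose_spec (((W_step A i T hv).2 hT).1 hown)).2
      obtain ⟨h1, h2⟩ := mem_W_of_phiXap A i T h
      exact ⟨h1, fun h' => absurd h' hT, fun _ => h2⟩

/-- Soundness: following the punishment strategy from the winning region, the
target set is visited only finitely often. -/
theorem pstrat_sound (χ : ℕ → V) (hp : A.IsPlay χ) (h0 : χ 0 ∈ Wwin A i T)
    (hf : ∀ t, A.owner (χ t) ≠ i → χ (t + 1) = pstrat A i T (χ t)) :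
    ∃ N, ∀ t, N ≤ t → χ t ∉ T := by
  have hW : ∀ t, χ t ∈ Wwin A i T := by
    intro t
    induction t with
    | zero => exact h0
    | succ t ih => exact (step_sound A i T ih (hp t) (hf t)).1
  have hmono : ∀ t, rnk A i T (χ (t + 1)) ≤ rnk A i T (χ t) := by
    intro t
    by_cases hT : χ t ∈ T
    · exact le_of_lt ((step_sound A i T (hW t) (hp t) (hf t)).2.1 hT)
    · exact (step_sound A i T (hW t) (hp t) (hf t)).2.2 hT
  set S : Set Ordinal := Set.range (fun t => rnk A i T (χ t)) with hS
  have hSne : S.Nonempty := ⟨rnk A i T (χ 0), ⟨0, rfl⟩⟩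
  obtain ⟨N, hN⟩ := (Ordinal.lt_wf.min_mem S hSne : Ordinal.lt_wf.min S hSne ∈ S)
  refine ⟨N, fun t ht hT => ?_⟩
  have hle : ∀ s, N ≤ s → rnk A i T (χ s) ≤ Ordinal.lt_wf.min S hSne := by
    intro s hs
    induction s with
    | zero =>
      have : N = 0 := Nat.le_zero.mp hs
      subst this; exact le_of_eq (by simpa using hN)
    | succ s ih =>
      rcases Nat.lt_or_ge N (s + 1) with h | h
      · exact le_trans (hmono s) (ih (Nat.lt_succ_iff.mp h))
      · have : N = s + 1 := le_antisymm hs h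
        subst this; exact le_of_eq (by simpa using hN)
  have hlt : rnk A i T (χ (t + 1)) < Ordinal.lt_wf.min S hSne :=
    lt_of_lt_of_le ((step_sound A i T (hW t) (hp t) (hf t)).2.1 hT) (hle t ht)
  exact Ordinal.lt_wf.not_lt_min S (x := rnk A i T (χ (t + 1))) ⟨t + 1, rfl⟩ hlt

end Fixed

end Punish
end Arena
namespace Arena
namespace Punish

open OrderHom OrdinalApprox

variable {V : Type} {n : ℕ}

/-- Adversary predecessor (dual of `cpre`). -/
def apre (A : Arena V n) (i : Fin n) (Y : Set V) : Set V :=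
  {v | (A.owner v ≠ i → ∀ w, A.E v w → w ∈ Y) ∧ (A.owner v = i → ∃ w, A.E v w ∧ w ∈ Y)}

theorem compl_cpre (A : Arena V n) (i : Fin n) (X : Set V) :
    (cpre A i X)ᶜ = apre A i Xᶜ := by
  ext v
  simp only [Set.mem_compl_iff]
  by_cases hown : A.owner v = i
  · constructor
    · intro h
      have h2 : ¬ ∀ w, A.E v w → w ∈ X := fun hall =>
        h ⟨fun h' => absurd hown h', fun _ => hall⟩
      push_neg at h2
      obtain ⟨w, hw, hx⟩ := h2
      exact ⟨fun h' => absurd hown h', fun _ => ⟨w, hw, hx⟩⟩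
    · intro h hc
      obtain ⟨w, hw, hx⟩ := h.2 hown
      exact hx (hc.2 hown w hw)
  · constructor
    · intro h
      have h2 : ¬ ∃ w, A.E v w ∧ w ∈ X := fun hex =>
        h ⟨fun _ => hex, fun h' => absurd h' hown⟩
      refine ⟨fun _ w hw => fun hxX => h2 ⟨w, hw, hxX⟩, fun h' => absurd h' hown⟩
    · intro h hc
      obtain ⟨w, hw, hwX⟩ := hc.1 hown
      exact (h.1 hown w hw) hwX

theorem apre_mono (A : Arena V n) (i : Fin n) {X Y : Set V} (hXY : X ≤ Y) :
    apre A i X ≤ apre A i Y := by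
  intro v hv
  exact ⟨fun h w hw => hXY (hv.1 h w hw),
    fun h => (hv.2 h).imp (fun w hw => ⟨hw.1, hXY hw.2⟩)⟩

section Fixed

variable (A : Arena V n) (i : Fin n) (T : Set V)

/-- Dual operator on the complement of the winning region. -/
def dOp : Set V →o Set V :=
  ⟨fun Z => (Tᶜ ∪ apre A i (Wwin A i T)ᶜ) ∩ (T ∪ apre A i Z), by
    intro Z Z' h
    exact Set.inter_subset_inter_right _ (Set.union_subset_union_right _ (apre_mono A i h))⟩

theorem dOp_eq (Z : Set V) : dOp A i T Z = (psiHom A i T (Wwin A i T) Zᶜ)ᶜ := by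
  show (Tᶜ ∪ apre A i (Wwin A i T)ᶜ) ∩ (T ∪ apre A i Z)
      = ((T ∩ cpre A i (Wwin A i T)) ∪ (Tᶜ ∩ cpre A i Zᶜ))ᶜ
  rw [Set.compl_union, Set.compl_inter, Set.compl_inter, compl_cpre, compl_cpre,
    compl_compl, compl_compl]

theorem psiW_fixed : psiHom A i T (Wwin A i T) (Wwin A i T) = Wwin A i T := by
  have h1 : gfp (psiHom A i T (Wwin A i T)) = Wwin A i T := Wwin_fixed A i T
  have h2 := map_gfp (psiHom A i T (Wwin A i T))
  calc psiHom A i T (Wwin A i T) (Wwin A i T)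
      = psiHom A i T (Wwin A i T) (gfp (psiHom A i T (Wwin A i T))) := by rw [h1]
    _ = gfp (psiHom A i T (Wwin A i T)) := h2
    _ = Wwin A i T := h1

theorem compl_W_eq : (Wwin A i T)ᶜ = lfp (dOp A i T) := by
  apply le_antisymm
  · have hfix : psiHom A i T (Wwin A i T) (lfp (dOp A i T))ᶜ = (lfp (dOp A i T))ᶜ := by
      have h := map_lfp (dOp A i T)
      rw [dOp_eq] at h
      rw [← compl_compl (psiHom A i T (Wwin A i T) (lfp (dOp A i T))ᶜ), h]
    have h2 : (lfp (dOp A i T))ᶜ ≤ Wwin A i T := by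
      have h3 := le_gfp (psiHom A i T (Wwin A i T)) (le_of_eq hfix.symm)
      rwa [show gfp (psiHom A i T (Wwin A i T)) = Wwin A i T from Wwin_fixed A i T] at h3
    exact Set.compl_subset_comm.mpr h2
  · apply lfp_le
    rw [dOp_eq, compl_compl, psiW_fixed]

noncomputable def Zap (b : Ordinal) : Set V := lfpApprox (dOp A i T) ⊥ b

theorem Zap_le_WC (b : Ordinal) : Zap A i T b ≤ (Wwin A i T)ᶜ := by
  rw [compl_W_eq]
  exact lfpApprox_le_of_mem_fixedPoints _ (map_lfp _) bot_le b

theorem mem_Zap_elim {w : V} {b : Ordinal} (hw : w ∈ Zap A i T b) :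
    ∃ b' < b, w ∈ dOp A i T (Zap A i T b') := by
  unfold Zap at hw
  rw [lfpApprox] at hw
  simp only [Set.bot_eq_empty, Set.sup_eq_union, Set.iSup_eq_iUnion, Set.mem_union,
    Set.mem_iUnion, Set.mem_empty_iff_false, false_or] at hw
  obtain ⟨b', hb', hws⟩ := hw
  exact ⟨b', hb', hws⟩

noncomputable def rnk' (v : V) : Ordinal := sInf {b | v ∈ dOp A i T (Zap A i T b)}

theorem rnk'_spec {v : V} (hv : v ∉ Wwin A i T) :
    v ∈ dOp A i T (Zap A i T (rnk' A i T v)) := by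
  have hne : {b | v ∈ dOp A i T (Zap A i T b)}.Nonempty := by
    refine ⟨(Order.succ (Cardinal.mk (Set V))).ord, ?_⟩
    show v ∈ dOp A i T (lfpApprox (dOp A i T) ⊥ _)
    rw [lfpApprox_ord_eq_lfp]
    rw [show dOp A i T (lfp (dOp A i T)) = lfp (dOp A i T) from map_lfp _, ← compl_W_eq]
    exact hv
  exact csInf_mem hne

theorem mem_WC_of_dZap {w : V} {b : Ordinal} (hw : w ∈ dOp A i T (Zap A i T b)) :
    w ∉ Wwin A i T ∧ rnk' A i T w ≤ b := by
  constructor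
  · have h1 : dOp A i T (Zap A i T b) ≤ dOp A i T (Wwin A i T)ᶜ :=
      (dOp A i T).monotone (Zap_le_WC A i T b)
    have h2 : dOp A i T (Wwin A i T)ᶜ = (Wwin A i T)ᶜ := by
      rw [compl_W_eq]; exact map_lfp _
    rw [h2] at h1
    exact h1 hw
  · exact csInf_le' hw

theorem mem_WC_of_Zap {w : V} {b : Ordinal} (hw : w ∈ Zap A i T b) :
    w ∉ Wwin A i T ∧ rnk' A i T w < b := by
  obtain ⟨b', hb', hw'⟩ := mem_Zap_elim A i T hw
  obtain ⟨h1, h2⟩ := mem_WC_of_dZap A i T hw'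
  exact ⟨h1, lt_of_le_of_lt h2 hb'⟩

theorem WC_step {v : V} (hv : v ∉ Wwin A i T) :
    (v ∈ T → v ∈ apre A i (Wwin A i T)ᶜ) ∧
    (v ∉ T → v ∈ apre A i (Zap A i T (rnk' A i T v))) := by
  have h := rnk'_spec A i T hv
  obtain ⟨h1, h2⟩ := h
  constructor
  · intro hT
    rcases h1 with h1 | h1
    · exact absurd hT h1
    · exact h1
  · intro hT
    rcases h2 with h2 | h2
    · exact absurd h2 hT
    · exact h2

/-- Adversary's choice function when outside the winning region. -/
noncomputable def advch : V → V := fun v =>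
  if h : v ∉ Wwin A i T ∧ A.owner v = i then
    (if hT : v ∈ T then
      Classical.choose (((WC_step A i T h.1).1 hT).2 h.2)
    else
      Classical.choose (((WC_step A i T h.1).2 hT).2 h.2))
  else Classical.choose (A.no_deadlock v)

theorem advch_valid (v : V) : A.E v (advch A i T v) := by
  unfold advch
  split
  · next h =>
    split
    · next hT => exact (Classical.choose_spec (((WC_step A i T h.1).1 hT).2 h.2)).1
    · next hT => exact (Classical.choose_spec (((WC_step A i T h.1).2 hT).2 h.2)).1
  · exact Classical.choose_spec (A.no_deadlock v)

theorem step_complete {v w : V} (hv : v ∉ Wwin A i T) (hE : A.E v w)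
    (hfol : A.owner v = i → w = advch A i T v) :
    w ∉ Wwin A i T ∧ (v ∉ T → rnk' A i T w < rnk' A i T v) := by
  by_cases hown : A.owner v = i
  · have hw := hfol hown
    subst hw
    unfold advch
    rw [dif_pos ⟨hv, hown⟩]
    by_cases hT : v ∈ T
    · rw [dif_pos hT]
      have h := (Classical.choose_spec (((WC_step A i T hv).1 hT).2 hown)).2
      exact ⟨h, fun h' => absurd hT h'⟩
    · rw [dif_neg hT]
      have h := (Classical.choose_spec (((WC_step A i T hv).2 hT).2 hown)).2
      obtain ⟨h1, h2⟩ := mem_WC_of_Zap A i T h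
      exact ⟨h1, fun _ => h2⟩
  · by_cases hT : v ∈ T
    · have h := ((WC_step A i T hv).1 hT).1 hown w hE
      exact ⟨h, fun h' => absurd hT h'⟩
    · have h := ((WC_step A i T hv).2 hT).1 hown w hE
      obtain ⟨h1, h2⟩ := mem_WC_of_Zap A i T h
      exact ⟨h1, fun _ => h2⟩

/-- Completeness: from outside the winning region, against any coalition behaviour
there is a consistent play visiting `T` infinitely often. -/
theorem complete_of_not_mem_W {u : V} (hu : u ∉ Wwin A i T)
    (f : List V → V → V) (hf : ∀ h v, A.E v (f h v)) :
    ∃ χ : ℕ → V, χ 0 = u ∧ A.IsPlay χ ∧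
      (∀ t, A.owner (χ t) ≠ i → χ (t + 1) = f (pref χ t) (χ t)) ∧
      χ ∈ BuchiObj T := by
  classical
  let step : List V → V → V := fun h v =>
    if A.owner v = i then advch A i T v else f h v
  let g : ℕ → List V × V := fun t => Nat.rec (([] : List V), u)
    (fun _ p => (p.1 ++ [p.2], step p.1 p.2)) t
  have hg0 : g 0 = ([], u) := rfl
  have hgs : ∀ t, g (t + 1) = ((g t).1 ++ [(g t).2], step (g t).1 (g t).2) := fun t => rfl
  set χ : ℕ → V := fun t => (g t).2 with hχ
  have hfst : ∀ t, (g t).1 = pref χ t := by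
    intro t
    induction t with
    | zero => simp [hg0, pref]
    | succ t ih => rw [hgs, pref_succ, ← ih]
  have hstep : ∀ t, χ (t + 1) = step (pref χ t) (χ t) := by
    intro t
    show (g (t + 1)).2 = _
    rw [hgs, ← hfst]
  have hstep' : ∀ t, χ (t + 1)
      = if A.owner (χ t) = i then advch A i T (χ t) else f (pref χ t) (χ t) := hstep
  have hplay : A.IsPlay χ := by
    intro t
    rw [hstep']
    split
    · exact advch_valid A i T (χ t)
    · exact hf _ _
  have hfol : ∀ t, A.owner (χ t) ≠ i → χ (t + 1) = f (pref χ t) (χ t) := by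
    intro t h
    rw [hstep', if_neg h]
  have hadv : ∀ t, A.owner (χ t) = i → χ (t + 1) = advch A i T (χ t) := by
    intro t h
    rw [hstep', if_pos h]
  have hWC : ∀ t, χ t ∉ Wwin A i T := by
    intro t
    induction t with
    | zero => exact hu
    | succ t ih => exact (step_complete A i T ih (hplay t) (hadv t)).1
  refine ⟨χ, rfl, hplay, hfol, ?_⟩
  intro j
  by_contra hc
  push_neg at hc
  have hd : ∀ t, rnk' A i T (χ (j + t + 1)) < rnk' A i T (χ (j + t)) := by
    intro t
    exact (step_complete A i T (hWC (j + t)) (hplay (j + t)) (hadv (j + t))).2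
      (hc (j + t) (by omega))
  set S : Set Ordinal := Set.range (fun t => rnk' A i T (χ (j + t))) with hS
  have hSne : S.Nonempty := ⟨rnk' A i T (χ (j + 0)), ⟨0, rfl⟩⟩
  obtain ⟨t0, ht0⟩ := (Ordinal.lt_wf.min_mem S hSne : Ordinal.lt_wf.min S hSne ∈ S)
  apply Ordinal.lt_wf.not_lt_min S (x := rnk' A i T (χ (j + (t0 + 1)))) ⟨t0 + 1, rfl⟩
  show rnk' A i T (χ (j + (t0 + 1))) < _
  rw [show Ordinal.lt_wf.min S hSne = rnk' A i T (χ (j + t0)) by simpa using ht0.symm]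
  rw [show j + (t0 + 1) = j + t0 + 1 by omega]
  exact hd t0

end Fixed

end Punish
end Arena
namespace Arena
namespace Machine

variable {V : Type} {n : ℕ}

/-- All the data needed to build the finite-memory equilibrium profile:
a simple path (`pv`, length `a`) from `v0` to the cycle, a periodic cycle `cv`
cut into `n` windows by `c`, anchor vertices for the satisfied players, and
positional punishment strategies `pun` with winning regions `Wb`. -/
structure Setup (A : Arena V n) (T : Fin n → Set V) (S : Set (Fin n)) (v0 : V) where
  a : ℕ
  pv : ℕ → V
  cv : ℕ → V
  c : ℕ → ℕ
  pun : Fin n → V → V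
  Wb : Fin n → Set V
  hn : 0 < n
  hpv0 : pv 0 = v0
  hpve : ∀ ℓ, ℓ < a → A.E (pv ℓ) (pv (ℓ + 1))
  hpva : pv a = cv (c 0)
  hcve : ∀ q, A.E (cv q) (cv (q + 1))
  hper : ∀ q, cv (c n + q) = cv (c 0 + q)
  hcm : ∀ k, k < n → c k < c (k + 1)
  hanch : ∀ i : Fin n, i ∈ S → cv (c i.val) ∈ T i
  havoid : ∀ i : Fin n, i ∉ S → ∀ q, cv q ∉ T i
  hpinj : ∀ q q', q ≤ a → q' ≤ a → pv q = pv q' → q = q'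
  hWsound : ∀ i : Fin n, i ∉ S → ∀ χ : ℕ → V, A.IsPlay χ → χ 0 ∈ Wb i →
    (∀ t, A.owner (χ t) ≠ i → χ (t + 1) = pun i (χ t)) → ∃ N, ∀ t, N ≤ t → χ t ∉ T i
  hdev : ∀ i : Fin n, i ∉ S → ∀ v u', ((∃ m, m ≤ a ∧ pv m = v) ∨ (∃ m, cv m = v)) →
    A.owner v = i → A.E v u' → u' ∈ Wb i
  hpun : ∀ i v, A.E v (pun i v)

/-- Memory states: prefix position, or (window, owner-of-last-vertex), or punish. -/
abbrev MSt (n a : ℕ) : Type := Fin (a + 1) ⊕ (Fin n × Fin n) ⊕ Fin n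

instance (n a : ℕ) : Finite (MSt n a) := by unfold MSt; infer_instance

variable {A : Arena V n} {T : Fin n → Set V} {S : Set (Fin n)} {v0 : V}

def k0 (St : Setup A T S v0) : Fin n := ⟨0, St.hn⟩

def knx (St : Setup A T S v0) (k : Fin n) : Fin n := ⟨(k.val + 1) % n, Nat.mod_lt _ St.hn⟩

/-- Blame for a deviation detected on the prefix at expected position `ℓ`. -/
def pb (St : Setup A T S v0) (ℓ : ℕ) : Fin n := A.owner (St.pv (ℓ - 1))

/-- `v` occurs in window `k` of the cycle. -/
def inWin (St : Setup A T S v0) (k : ℕ) (v : V) : Prop :=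
  ∃ q, St.c k ≤ q ∧ q < St.c (k + 1) ∧ St.cv q = v

/-- Last position of `v` in window `k`. -/
noncomputable def posL (St : Setup A T S v0) (k : ℕ) (v : V) : ℕ :=
  Nat.findGreatest (fun q => St.c k ≤ q ∧ St.cv q = v) (St.c (k + 1) - 1)

theorem posL_spec (St : Setup A T S v0) {k : ℕ} {v : V} (h : inWin St k v) :
    St.c k ≤ posL St k v ∧ posL St k v < St.c (k + 1) ∧ St.cv (posL St k v) = v ∧
      ∀ q, St.c k ≤ q → q < St.c (k + 1) → St.cv q = v → q ≤ posL St k v := by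
  obtain ⟨q, hq1, hq2, hq3⟩ := h
  have hb : q ≤ St.c (k + 1) - 1 := by omega
  unfold posL
  have hsp := Nat.findGreatest_spec (P := fun q => St.c k ≤ q ∧ St.cv q = v) hb ⟨hq1, hq3⟩
  have hle := Nat.findGreatest_le (P := fun q => St.c k ≤ q ∧ St.cv q = v) (St.c (k + 1) - 1)
  exact ⟨hsp.1, by omega, hsp.2, fun q' h1 h2 h3 =>
    Nat.le_findGreatest (by omega) ⟨h1, h3⟩⟩

/-- The Mealy machine output function. -/
noncomputable def mnxt (St : Setup A T S v0) : MSt n St.a → V → V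
  | Sum.inl ℓ, v =>
    if v = St.pv ℓ.val then
      (if ℓ.val < St.a then St.pv (ℓ.val + 1) else St.cv (St.c 0 + 1))
    else St.pun (pb St ℓ.val) v
  | Sum.inr (Sum.inl kj), v =>
    if v = St.cv (St.c (kj.1.val + 1)) then St.cv (St.c (kj.1.val + 1) + 1)
    else if inWin St kj.1.val v then St.cv (posL St kj.1.val v + 1)
    else St.pun kj.2 v
  | Sum.inr (Sum.inr i), v => St.pun i v

/-- The Mealy machine update function. -/
noncomputable def mup (St : Setup A T S v0) : MSt n St.a → V → MSt n St.a
  | Sum.inl ℓ, w =>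
    if w = St.pv ℓ.val then
      (if h : ℓ.val < St.a then Sum.inl ⟨ℓ.val + 1, by omega⟩
       else Sum.inr (Sum.inl (k0 St, A.owner w)))
    else Sum.inr (Sum.inr (pb St ℓ.val))
  | Sum.inr (Sum.inl kj), w =>
    if w = St.cv (St.c (kj.1.val + 1)) then Sum.inr (Sum.inl (knx St kj.1, A.owner w))
    else if inWin St kj.1.val w then Sum.inr (Sum.inl (kj.1, A.owner w))
    else Sum.inr (Sum.inr kj.2)
  | Sum.inr (Sum.inr i), _ => Sum.inr (Sum.inr i)

def minit (St : Setup A T S v0) : MSt n St.a := Sum.inl ⟨0, by omega⟩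

theorem mnxt_valid (St : Setup A T S v0) (m : MSt n St.a) (v : V) :
    A.E v (mnxt St m v) := by
  match m with
  | Sum.inl ℓ =>
    show A.E v (if v = St.pv ℓ.val then _ else _)
    by_cases hv : v = St.pv ℓ.val
    · rw [if_pos hv]
      by_cases hℓ : ℓ.val < St.a
      · rw [if_pos hℓ, hv]; exact St.hpve ℓ.val hℓ
      · have hℓa : ℓ.val = St.a := by have := ℓ.isLt; omega
        rw [if_neg hℓ, hv, hℓa, St.hpva]
        exact St.hcve _
    · rw [if_neg hv]; exact St.hpun _ v
  | Sum.inr (Sum.inl kj) =>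
    show A.E v (if v = St.cv (St.c (kj.1.val + 1)) then _ else _)
    by_cases hv : v = St.cv (St.c (kj.1.val + 1))
    · rw [if_pos hv, hv]; exact St.hcve _
    · rw [if_neg hv]
      by_cases hw : inWin St kj.1.val v
      · rw [if_pos hw]
        have h3 := (posL_spec St hw).2.2.1
        have h4 := St.hcve (posL St kj.1.val v)
        rwa [h3] at h4
      · rw [if_neg hw]; exact St.hpun _ v
  | Sum.inr (Sum.inr i) => exact St.hpun i v

/-- The finite-memory strategy induced by the machine. -/
noncomputable def mstrat (St : Setup A T S v0) : A.Strategy :=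
  ⟨fun h v => mnxt St (h.foldl (mup St) (minit St)) v, fun h v => mnxt_valid St _ v⟩

/-- The equilibrium profile: every player uses the same machine. -/
noncomputable def prof (St : Setup A T S v0) : Fin n → A.Strategy := fun _ => mstrat St

/-- Machine state after the first `t` vertices of a play. -/
noncomputable def mst (St : Setup A T S v0) (ξ : ℕ → V) (t : ℕ) : MSt n St.a :=
  (pref ξ t).foldl (mup St) (minit St)

theorem mst_zero (St : Setup A T S v0) (ξ : ℕ → V) : mst St ξ 0 = minit St := rfl

theorem mst_succ (St : Setup A T S v0) (ξ : ℕ → V) (t : ℕ) :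
    mst St ξ (t + 1) = mup St (mst St ξ t) (ξ t) := by
  unfold mst
  rw [pref_succ, List.foldl_append]
  rfl

/-- A vertex is accepted (considered on-track) by the machine in a given state. -/
def Acc (St : Setup A T S v0) : MSt n St.a → V → Prop
  | Sum.inl ℓ, v => v = St.pv ℓ.val
  | Sum.inr (Sum.inl kj), v => v = St.cv (St.c (kj.1.val + 1)) ∨ inWin St kj.1.val v
  | Sum.inr (Sum.inr _), _ => False

def blame (St : Setup A T S v0) : MSt n St.a → Fin n
  | Sum.inl ℓ => pb St ℓ.val
  | Sum.inr (Sum.inl kj) => kj.2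
  | Sum.inr (Sum.inr i) => i

def isPun (St : Setup A T S v0) : MSt n St.a → Prop
  | Sum.inr (Sum.inr _) => True
  | _ => False

theorem fallback (St : Setup A T S v0) (m : MSt n St.a) (v : V) (h : ¬ Acc St m v) :
    mnxt St m v = St.pun (blame St m) v ∧
      mup St m v = Sum.inr (Sum.inr (blame St m)) := by
  match m with
  | Sum.inl ℓ =>
    have hv : ¬ v = St.pv ℓ.val := h
    constructor
    · show (if v = St.pv ℓ.val then _ else _) = _
      rw [if_neg hv]; rfl
    · show (if v = St.pv ℓ.val then _ else _) = _
      rw [if_neg hv]; rfl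
  | Sum.inr (Sum.inl kj) =>
    have h' : ¬ (v = St.cv (St.c (kj.1.val + 1)) ∨ inWin St kj.1.val v) := h
    push_neg at h'
    constructor
    · show (if v = St.cv (St.c (kj.1.val + 1)) then _ else _) = _
      rw [if_neg h'.1, if_neg h'.2]; rfl
    · show (if v = St.cv (St.c (kj.1.val + 1)) then _ else _) = _
      rw [if_neg h'.1, if_neg h'.2]; rfl
  | Sum.inr (Sum.inr i) => exact ⟨rfl, rfl⟩

theorem pun_absorb (St : Setup A T S v0) (i : Fin n) (v : V) :
    mup St (Sum.inr (Sum.inr i)) v = Sum.inr (Sum.inr i) := rfl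

/-- Key lemma: the machine's own prescribed move is always accepted. -/
theorem key (St : Setup A T S v0) (m : MSt n St.a) (v : V) (h : Acc St m v) :
    Acc St (mup St m v) (mnxt St m v) := by
  match m with
  | Sum.inl ℓ =>
    have hv : v = St.pv ℓ.val := h
    by_cases hℓ : ℓ.val < St.a
    · have h1 : mup St (Sum.inl ℓ) v = Sum.inl ⟨ℓ.val + 1, by omega⟩ := by
        show (if v = St.pv ℓ.val then _ else _) = _
        rw [if_pos hv, dif_pos hℓ]
      have h2 : mnxt St (Sum.inl ℓ) v = St.pv (ℓ.val + 1) := by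
        show (if v = St.pv ℓ.val then _ else _) = _
        rw [if_pos hv, if_pos hℓ]
      rw [h1, h2]
      exact rfl
    · have h1 : mup St (Sum.inl ℓ) v = Sum.inr (Sum.inl (k0 St, A.owner v)) := by
        show (if v = St.pv ℓ.val then _ else _) = _
        rw [if_pos hv, dif_neg hℓ]
      have h2 : mnxt St (Sum.inl ℓ) v = St.cv (St.c 0 + 1) := by
        show (if v = St.pv ℓ.val then _ else _) = _
        rw [if_pos hv, if_neg hℓ]
      rw [h1, h2]
      show St.cv (St.c 0 + 1) = St.cv (St.c ((k0 St).val + 1)) ∨ inWin St (k0 St).val _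
      have hc01 : St.c 0 < St.c 1 := St.hcm 0 St.hn
      by_cases he : St.c 0 + 1 = St.c 1
      · left
        show St.cv (St.c 0 + 1) = St.cv (St.c (0 + 1))
        rw [show (0 + 1 : ℕ) = 1 from rfl, ← he]
      · right
        refine ⟨St.c 0 + 1, ?_, ?_, rfl⟩
        · show St.c 0 ≤ St.c 0 + 1
          omega
        · show St.c 0 + 1 < St.c 1
          omega
  | Sum.inr (Sum.inl kj) =>
    obtain ⟨k, j⟩ := kj
    by_cases hv : v = St.cv (St.c (k.val + 1))
    · have h1 : mup St (Sum.inr (Sum.inl (k, j))) v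
          = Sum.inr (Sum.inl (knx St k, A.owner v)) := by
        show (if v = St.cv (St.c (k.val + 1)) then _ else _) = _
        rw [if_pos hv]
      have h2 : mnxt St (Sum.inr (Sum.inl (k, j))) v = St.cv (St.c (k.val + 1) + 1) := by
        show (if v = St.cv (St.c (k.val + 1)) then _ else _) = _
        rw [if_pos hv]
      rw [h1, h2]
      show St.cv (St.c (k.val + 1) + 1) = St.cv (St.c ((knx St k).val + 1))
          ∨ inWin St (knx St k).val _
      by_cases hkn : k.val + 1 < n
      · have hkx : (knx St k).val = k.val + 1 := by
          show (k.val + 1) % n = k.val + 1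
          exact Nat.mod_eq_of_lt hkn
        have hcc : St.c (k.val + 1) < St.c (k.val + 2) := St.hcm (k.val + 1) hkn
        by_cases he : St.c (k.val + 1) + 1 = St.c (k.val + 2)
        · left; rw [hkx, show k.val + 1 + 1 = k.val + 2 from rfl, ← he]
        · right
          rw [hkx]
          refine ⟨St.c (k.val + 1) + 1, ?_, ?_, rfl⟩
          · omega
          · show St.c (k.val + 1) + 1 < St.c (k.val + 2)
            omega
      · have hkn' : k.val + 1 = n := by have := k.isLt; omega
        have hkx : (knx St k).val = 0 := by
          show (k.val + 1) % n = 0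
          rw [hkn', Nat.mod_self]
        have hval : St.cv (St.c (k.val + 1) + 1) = St.cv (St.c 0 + 1) := by
          rw [hkn']; exact St.hper 1
        rw [hkx, hval]
        have hc01 : St.c 0 < St.c 1 := St.hcm 0 St.hn
        by_cases he : St.c 0 + 1 = St.c 1
        · left
          show St.cv (St.c 0 + 1) = St.cv (St.c (0 + 1))
          rw [show (0 + 1 : ℕ) = 1 from rfl, ← he]
        · right
          refine ⟨St.c 0 + 1, ?_, ?_, rfl⟩
          · show St.c 0 ≤ St.c 0 + 1
            omega
          · show St.c 0 + 1 < St.c 1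
            omega
    · have hw : inWin St k.val v := by
        rcases h with h | h
        · exact absurd h hv
        · exact h
      obtain ⟨hq1, hq2, hq3, _⟩ := posL_spec St hw
      set q := posL St k.val v with hqdef
      have h1 : mup St (Sum.inr (Sum.inl (k, j))) v
          = Sum.inr (Sum.inl (k, A.owner v)) := by
        show (if v = St.cv (St.c (k.val + 1)) then _ else _) = _
        rw [if_neg hv, if_pos hw]
      have h2 : mnxt St (Sum.inr (Sum.inl (k, j))) v = St.cv (q + 1) := by
        show (if v = St.cv (St.c (k.val + 1)) then _ else _) = _
        rw [if_neg hv, if_pos hw]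
      rw [h1, h2]
      show St.cv (q + 1) = St.cv (St.c (k.val + 1)) ∨ inWin St k.val _
      by_cases he : q + 1 = St.c (k.val + 1)
      · left; rw [he]
      · right
        exact ⟨q + 1, by omega, by omega, rfl⟩
  | Sum.inr (Sum.inr i) => exact absurd h (by exact id)

theorem acc_not_pun (St : Setup A T S v0) (m : MSt n St.a) (v : V) (h : Acc St m v)
    (hm : ¬ isPun St m) : ¬ isPun St (mup St m v) := by
  match m with
  | Sum.inl ℓ =>
    have hv : v = St.pv ℓ.val := h
    show ¬ isPun St (if v = St.pv ℓ.val then _ else _)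
    rw [if_pos hv]
    by_cases hℓ : ℓ.val < St.a
    · rw [dif_pos hℓ]; exact fun hc => hc
    · rw [dif_neg hℓ]; exact fun hc => hc
  | Sum.inr (Sum.inl kj) =>
    show ¬ isPun St (if v = St.cv (St.c (kj.1.val + 1)) then _ else _)
    by_cases hv : v = St.cv (St.c (kj.1.val + 1))
    · rw [if_pos hv]; exact fun hc => hc
    · rw [if_neg hv]
      have hw : inWin St kj.1.val v := by
        rcases h with h | h
        · exact absurd h hv
        · exact h
      rw [if_pos hw]; exact fun hc => hc
  | Sum.inr (Sum.inr i) => exact absurd trivial hm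

end Machine
end Arena
namespace Arena
namespace Machine

variable {V : Type} {n : ℕ} {A : Arena V n} {T : Fin n → Set V} {S : Set (Fin n)} {v0 : V}

section MupLemmas

variable (St : Setup A T S v0)

theorem mup_P_pos (ℓ : Fin (St.a + 1)) (w : V) (hv : w = St.pv ℓ.val) (hℓ : ℓ.val < St.a) :
    mup St (Sum.inl ℓ) w = Sum.inl ⟨ℓ.val + 1, by omega⟩ := by
  show (if w = St.pv ℓ.val then _ else _) = _
  rw [if_pos hv, dif_pos hℓ]

theorem mup_P_end (ℓ : Fin (St.a + 1)) (w : V) (hv : w = St.pv ℓ.val) (hℓ : ¬ ℓ.val < St.a) :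
    mup St (Sum.inl ℓ) w = Sum.inr (Sum.inl (k0 St, A.owner w)) := by
  show (if w = St.pv ℓ.val then _ else _) = _
  rw [if_pos hv, dif_neg hℓ]

theorem mup_P_neg (ℓ : Fin (St.a + 1)) (w : V) (hv : ¬ w = St.pv ℓ.val) :
    mup St (Sum.inl ℓ) w = Sum.inr (Sum.inr (pb St ℓ.val)) := by
  show (if w = St.pv ℓ.val then _ else _) = _
  rw [if_neg hv]

theorem mup_C_end (k j : Fin n) (w : V) (hv : w = St.cv (St.c (k.val + 1))) :
    mup St (Sum.inr (Sum.inl (k, j))) w = Sum.inr (Sum.inl (knx St k, A.owner w)) := by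
  show (if w = St.cv (St.c (k.val + 1)) then _ else _) = _
  rw [if_pos hv]

theorem mup_C_in (k j : Fin n) (w : V) (hv : ¬ w = St.cv (St.c (k.val + 1)))
    (hw : inWin St k.val w) :
    mup St (Sum.inr (Sum.inl (k, j))) w = Sum.inr (Sum.inl (k, A.owner w)) := by
  show (if w = St.cv (St.c (k.val + 1)) then _ else _) = _
  rw [if_neg hv, if_pos hw]

theorem mup_C_out (k j : Fin n) (w : V) (hv : ¬ w = St.cv (St.c (k.val + 1)))
    (hw : ¬ inWin St k.val w) :
    mup St (Sum.inr (Sum.inl (k, j))) w = Sum.inr (Sum.inr j) := by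
  show (if w = St.cv (St.c (k.val + 1)) then _ else _) = _
  rw [if_neg hv, if_neg hw]

theorem mnxt_pun (i : Fin n) (v : V) :
    mnxt St (Sum.inr (Sum.inr i)) v = St.pun i v := rfl

end MupLemmas

section Play

variable (St : Setup A T S v0) (ξ : ℕ → V)

theorem notPun_succ (t : ℕ) (h : ¬ isPun St (mst St ξ (t + 1))) :
    ¬ isPun St (mst St ξ t) ∧ Acc St (mst St ξ t) (ξ t) := by
  rw [mst_succ] at h
  have hacc : Acc St (mst St ξ t) (ξ t) := by
    by_contra hc
    exact h (by rw [(fallback St _ _ hc).2]; trivial)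
  refine ⟨?_, hacc⟩
  intro hp
  rcases hmm : mst St ξ t with ℓ | kj | i
  · rw [hmm] at hp; exact hp
  · rw [hmm] at hp; exact hp
  · rw [hmm, pun_absorb] at h; exact h trivial

theorem prefix_exact : ∀ (t : ℕ) (ℓ : Fin (St.a + 1)), mst St ξ t = Sum.inl ℓ →
    ℓ.val = t ∧ ∀ u, u < t → ξ u = St.pv u := by
  intro t
  induction t with
  | zero =>
    intro ℓ h
    rw [mst_zero] at h
    have h' : (⟨0, by omega⟩ : Fin (St.a + 1)) = ℓ := Sum.inl.inj h
    exact ⟨by rw [← h'], fun u hu => absurd hu (by omega)⟩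
  | succ t ih =>
    intro ℓ h
    rw [mst_succ] at h
    rcases hmm : mst St ξ t with ℓ' | ⟨k, j⟩ | i <;> rw [hmm] at h
    · by_cases hv : ξ t = St.pv ℓ'.val
      · by_cases hℓ : ℓ'.val < St.a
        · rw [mup_P_pos St ℓ' _ hv hℓ] at h
          have h' : (⟨ℓ'.val + 1, by omega⟩ : Fin (St.a + 1)) = ℓ := Sum.inl.inj h
          obtain ⟨ih1, ih2⟩ := ih ℓ' hmm
          have hval : ℓ.val = ℓ'.val + 1 := by rw [← h']
          refine ⟨by omega, fun u hu => ?_⟩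
          rcases Nat.lt_or_ge u t with h' | h'
          · exact ih2 u h'
          · have hu' : u = t := by omega
            subst hu'
            rw [hv, ih1]
        · rw [mup_P_end St ℓ' _ hv hℓ] at h
          exact absurd h (fun hc => by cases hc)
      · rw [mup_P_neg St ℓ' _ hv] at h
        exact absurd h (fun hc => by cases hc)
    · by_cases hv : ξ t = St.cv (St.c (k.val + 1))
      · rw [mup_C_end St k j _ hv] at h
        exact absurd h (fun hc => by cases hc)
      · by_cases hw : inWin St k.val (ξ t)
        · rw [mup_C_in St k j _ hv hw] at h
          exact absurd h (fun hc => by cases hc)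
        · rw [mup_C_out St k j _ hv hw] at h
          exact absurd h (fun hc => by cases hc)
    · rw [pun_absorb] at h; exact absurd h (fun hc => by cases hc)

theorem C_owner (t : ℕ) (k j : Fin n) (h : mst St ξ (t + 1) = Sum.inr (Sum.inl (k, j))) :
    j = A.owner (ξ t) := by
  rw [mst_succ] at h
  rcases hmm : mst St ξ t with ℓ' | ⟨k', j'⟩ | i <;> rw [hmm] at h
  · by_cases hv : ξ t = St.pv ℓ'.val
    · by_cases hℓ : ℓ'.val < St.a
      · rw [mup_P_pos St ℓ' _ hv hℓ] at h
        exact absurd h (fun hc => by cases hc)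
      · rw [mup_P_end St ℓ' _ hv hℓ] at h
        exact (congrArg Prod.snd (Sum.inl.inj (Sum.inr.inj h))).symm
    · rw [mup_P_neg St ℓ' _ hv] at h
      exact absurd h (fun hc => by cases hc)
  · by_cases hv : ξ t = St.cv (St.c (k'.val + 1))
    · rw [mup_C_end St k' j' _ hv] at h
      exact (congrArg Prod.snd (Sum.inl.inj (Sum.inr.inj h))).symm
    · by_cases hw : inWin St k'.val (ξ t)
      · rw [mup_C_in St k' j' _ hv hw] at h
        exact (congrArg Prod.snd (Sum.inl.inj (Sum.inr.inj h))).symm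
      · rw [mup_C_out St k' j' _ hv hw] at h
        exact absurd h (fun hc => by cases hc)
  · rw [pun_absorb] at h
    exact absurd h (fun hc => by cases hc)

theorem pun_forever (t : ℕ) (i : Fin n) (h : mst St ξ t = Sum.inr (Sum.inr i)) :
    ∀ t', t ≤ t' → mst St ξ t' = Sum.inr (Sum.inr i) := by
  intro t' ht
  induction t' with
  | zero =>
    have h0 : t = 0 := by omega
    subst h0; exact h
  | succ t'' ih =>
    rcases Nat.lt_or_ge t (t'' + 1) with h' | h'
    · rw [mst_succ, ih (by omega), pun_absorb]
    · have h0 : t = t'' + 1 := by omega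
      subst h0; exact h

theorem prefix_states (hξ0 : ξ 0 = v0)
    (hAcc : ∀ t, Acc St (mst St ξ t) (ξ t)) :
    ∀ (t : ℕ) (ht : t ≤ St.a), mst St ξ t = Sum.inl ⟨t, by omega⟩ := by
  intro t
  induction t with
  | zero => intro _; rfl
  | succ t ih =>
    intro ht
    have h1 := ih (by omega)
    have hacc := hAcc t
    rw [h1] at hacc
    have hv : ξ t = St.pv t := hacc
    rw [mst_succ, h1, mup_P_pos St _ _ hv (by show t < St.a; omega)]

theorem C_states (hξ0 : ξ 0 = v0)
    (hAcc : ∀ t, Acc St (mst St ξ t) (ξ t)) :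
    ∀ t, St.a + 1 ≤ t → ∃ kj : Fin n × Fin n, mst St ξ t = Sum.inr (Sum.inl kj) := by
  intro t
  induction t with
  | zero => omega
  | succ t ih =>
    intro ht
    by_cases hta : St.a + 1 ≤ t
    · obtain ⟨⟨k, j⟩, hkj⟩ := ih hta
      have hacc := hAcc t
      rw [hkj] at hacc
      by_cases hv : ξ t = St.cv (St.c (k.val + 1))
      · exact ⟨_, by rw [mst_succ, hkj, mup_C_end St k j _ hv]⟩
      · have hw : inWin St k.val (ξ t) := by
          rcases hacc with h | h
          · exact absurd h hv
          · exact h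
        exact ⟨_, by rw [mst_succ, hkj, mup_C_in St k j _ hv hw]⟩
    · have hta' : t = St.a := by omega
      subst hta'
      have h1 := prefix_states St ξ hξ0 hAcc St.a (le_refl _)
      have hacc := hAcc St.a
      rw [h1] at hacc
      have hv : ξ St.a = St.pv St.a := hacc
      rw [mst_succ, h1, mup_P_end St _ _ hv (by show ¬ St.a < St.a; omega)]
      exact ⟨_, rfl⟩

theorem no_pun_tail (hξ0 : ξ 0 = v0) (hp : ∀ t, ¬ isPun St (mst St ξ t)) :
    ∀ t, St.a + 1 ≤ t → ∃ q, ξ t = St.cv q := by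
  have hAcc : ∀ t, Acc St (mst St ξ t) (ξ t) := fun t => (notPun_succ St ξ t (hp (t + 1))).2
  intro t ht
  obtain ⟨⟨k, j⟩, hkj⟩ := C_states St ξ hξ0 hAcc t ht
  have hacc := hAcc t
  rw [hkj] at hacc
  rcases hacc with h | ⟨q, _, _, hq⟩
  · exact ⟨_, h⟩
  · exact ⟨q, hq.symm⟩

/-- Main deviation analysis: a unilateral deviation of a losing player never wins. -/
theorem deviation (i₀ : Fin n) (hi₀ : i₀ ∉ S) (hξ0 : ξ 0 = v0) (hplay : A.IsPlay ξ)
    (hfol : ∀ t, A.owner (ξ t) ≠ i₀ → ξ (t + 1) = mnxt St (mst St ξ t) (ξ t)) :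
    ξ ∉ BuchiObj (T i₀) := by
  by_cases hp : ∀ t, ¬ isPun St (mst St ξ t)
  · intro hb
    obtain ⟨kk, hk1, hk2⟩ := hb (St.a + 1)
    obtain ⟨q, hq⟩ := no_pun_tail St ξ hξ0 hp kk hk1
    exact St.havoid i₀ hi₀ q (hq ▸ hk2)
  · push_neg at hp
    have hex : ∃ t, isPun St (mst St ξ t) := hp
    have hfind := Nat.find_spec hex
    have hmin : ∀ t, t < Nat.find hex → ¬ isPun St (mst St ξ t) :=
      fun t h => Nat.find_min hex h
    have h0 : ¬ isPun St (mst St ξ 0) := by rw [mst_zero]; exact fun h => h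
    have h1 : ¬ isPun St (mst St ξ 1) := by
      rw [show (1:ℕ) = 0 + 1 from rfl, mst_succ, mst_zero]
      have hv : ξ 0 = St.pv (0:ℕ) := by rw [hξ0, St.hpv0]
      exact acc_not_pun St (minit St) (ξ 0) hv (fun h => h)
    have ht2 : 2 ≤ Nat.find hex := by
      rcases Nat.lt_or_ge (Nat.find hex) 2 with h | h
      · rcases (by omega : Nat.find hex = 0 ∨ Nat.find hex = 1) with h' | h' <;>
          rw [h'] at hfind
        · exact absurd hfind h0
        · exact absurd hfind h1
      · exact h
    set t2 := Nat.find hex - 2 with ht2def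
    have ht'' : Nat.find hex = t2 + 2 := by omega
    have hnp1 : ¬ isPun St (mst St ξ (t2 + 1)) := hmin _ (by omega)
    have hA2 : Acc St (mst St ξ t2) (ξ t2) := (notPun_succ St ξ t2 hnp1).2
    have hnp2 : ¬ isPun St (mst St ξ t2) := (notPun_succ St ξ t2 hnp1).1
    have hfind' : isPun St (mst St ξ (t2 + 2)) := by rw [← ht'']; exact hfind
    have hNA1 : ¬ Acc St (mst St ξ (t2 + 1)) (ξ (t2 + 1)) := by
      intro hacc
      have hnp := acc_not_pun St _ _ hacc hnp1
      rw [← mst_succ] at hnp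
      exact hnp hfind'
    have hown : A.owner (ξ t2) = i₀ := by
      by_contra hc
      have h := hfol t2 hc
      have hk := key St (mst St ξ t2) (ξ t2) hA2
      rw [← mst_succ, ← h] at hk
      exact hNA1 hk
    have hblame : blame St (mst St ξ (t2 + 1)) = i₀ := by
      rcases hmm : mst St ξ (t2 + 1) with ℓ | ⟨k, j⟩ | i
      · obtain ⟨hℓval, hall⟩ := prefix_exact St ξ (t2 + 1) ℓ hmm
        show pb St ℓ.val = i₀
        unfold pb
        rw [hℓval]
        have hxt : ξ t2 = St.pv t2 := hall t2 (by omega)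
        rw [show t2 + 1 - 1 = t2 from by omega, ← hxt, hown]
      · have hj := C_owner St ξ t2 k j hmm
        show j = i₀
        rw [hj, hown]
      · rw [hmm] at hnp1; exact absurd trivial hnp1
    have hpun' : mst St ξ (t2 + 2) = Sum.inr (Sum.inr i₀) := by
      rw [show t2 + 2 = (t2 + 1) + 1 from rfl, mst_succ, (fallback St _ _ hNA1).2, hblame]
    have hWmem : ξ (t2 + 1) ∈ St.Wb i₀ := by
      apply St.hdev i₀ hi₀ (ξ t2) (ξ (t2 + 1)) ?_ hown (hplay t2)
      rcases hmm : mst St ξ t2 with ℓ | ⟨k, j⟩ | i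
      · rw [hmm] at hA2
        have hv : ξ t2 = St.pv ℓ.val := hA2
        left; exact ⟨ℓ.val, by have := ℓ.isLt; omega, hv.symm⟩
      · rw [hmm] at hA2
        rcases hA2 with hv | ⟨q, _, _, hq⟩
        · right; exact ⟨_, hv.symm⟩
        · right; exact ⟨q, hq⟩
      · rw [hmm] at hnp2; exact absurd trivial hnp2
    have hfolpun : ∀ m, A.owner (ξ (t2 + 1 + m)) ≠ i₀ →
        ξ (t2 + 1 + m + 1) = St.pun i₀ (ξ (t2 + 1 + m)) := by
      intro m hm
      have h := hfol (t2 + 1 + m) hm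
      match m with
      | 0 => rw [h, (fallback St _ _ hNA1).1, hblame]
      | Nat.succ m' =>
        have hpstate : mst St ξ (t2 + 1 + (m' + 1)) = Sum.inr (Sum.inr i₀) :=
          pun_forever St ξ (t2 + 2) i₀ hpun' _ (by omega)
        rw [h, hpstate, mnxt_pun]
    obtain ⟨N, hN⟩ := St.hWsound i₀ hi₀ (fun m => ξ (t2 + 1 + m))
      (fun m => hplay (t2 + 1 + m)) hWmem hfolpun
    intro hb
    obtain ⟨kk, hk1, hk2⟩ := hb (t2 + 1 + N)
    exact hN (kk - (t2 + 1)) (by omega)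
      (by rw [show t2 + 1 + (kk - (t2 + 1)) = kk from by omega]; exact hk2)

end Play

end Machine
end Arena
namespace Arena
namespace Machine

variable {V : Type} {n : ℕ} {A : Arena V n} {T : Fin n → Set V} {S : Set (Fin n)} {v0 : V}

section MnxtLemmas

variable (St : Setup A T S v0)

theorem mnxt_P_pos (ℓ : Fin (St.a + 1)) (v : V) (hv : v = St.pv ℓ.val) (hℓ : ℓ.val < St.a) :
    mnxt St (Sum.inl ℓ) v = St.pv (ℓ.val + 1) := by
  show (if v = St.pv ℓ.val then _ else _) = _
  rw [if_pos hv, if_pos hℓ]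

theorem mnxt_P_end (ℓ : Fin (St.a + 1)) (v : V) (hv : v = St.pv ℓ.val) (hℓ : ¬ ℓ.val < St.a) :
    mnxt St (Sum.inl ℓ) v = St.cv (St.c 0 + 1) := by
  show (if v = St.pv ℓ.val then _ else _) = _
  rw [if_pos hv, if_neg hℓ]

theorem mnxt_C_end (k j : Fin n) (v : V) (hv : v = St.cv (St.c (k.val + 1))) :
    mnxt St (Sum.inr (Sum.inl (k, j))) v = St.cv (St.c (k.val + 1) + 1) := by
  show (if v = St.cv (St.c (k.val + 1)) then _ else _) = _
  rw [if_pos hv]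

theorem mnxt_C_in (k j : Fin n) (v : V) (hv : ¬ v = St.cv (St.c (k.val + 1)))
    (hw : inWin St k.val v) :
    mnxt St (Sum.inr (Sum.inl (k, j))) v = St.cv (posL St k.val v + 1) := by
  show (if v = St.cv (St.c (k.val + 1)) then _ else _) = _
  rw [if_neg hv, if_pos hw]

end MnxtLemmas

section Honest

variable (St : Setup A T S v0) (ξ : ℕ → V)

/-- Position data for the honest play after the prefix. -/
def Dat (t : ℕ) (k : Fin n) (q : ℕ) : Prop :=
  (∃ j, mst St ξ t = Sum.inr (Sum.inl (k, j))) ∧ ξ t = St.cv q ∧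
    St.c k.val ≤ q ∧ q ≤ St.c (k.val + 1)

variable (hξ0 : ξ 0 = v0) (hfolall : ∀ t, ξ (t + 1) = mnxt St (mst St ξ t) (ξ t))

include hξ0 hfolall

theorem honest_acc : ∀ t, Acc St (mst St ξ t) (ξ t) := by
  intro t
  induction t with
  | zero =>
    show Acc St (minit St) (ξ 0)
    show ξ 0 = St.pv (0 : ℕ)
    rw [hξ0, St.hpv0]
  | succ t ih =>
    rw [hfolall t, mst_succ]
    exact key St _ _ ih

theorem dat_start : Dat St ξ (St.a + 1) (k0 St) (St.c 0 + 1) := by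
  have hAcc := honest_acc St ξ hξ0 hfolall
  have h1 := prefix_states St ξ hξ0 hAcc St.a (le_refl _)
  have hacc := hAcc St.a
  rw [h1] at hacc
  have hv : ξ St.a = St.pv St.a := hacc
  refine ⟨⟨A.owner (ξ St.a), ?_⟩, ?_, ?_, ?_⟩
  · rw [mst_succ, h1, mup_P_end St _ _ hv (by show ¬ St.a < St.a; omega)]
  · rw [hfolall St.a, h1, mnxt_P_end St _ _ hv (by show ¬ St.a < St.a; omega)]
  · show St.c 0 ≤ St.c 0 + 1
    omega
  · show St.c 0 + 1 ≤ St.c (0 + 1)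
    have := St.hcm 0 St.hn
    omega

theorem dat_step {t : ℕ} {k : Fin n} {q : ℕ} (hd : Dat St ξ t k q) :
    (ξ t = St.cv (St.c (k.val + 1)) ∧ ∃ q', Dat St ξ (t + 1) (knx St k) q')
    ∨ (ξ t ≠ St.cv (St.c (k.val + 1)) ∧
        ∃ q', q < q' ∧ q' ≤ St.c (k.val + 1) ∧ Dat St ξ (t + 1) k q') := by
  obtain ⟨⟨j, hst⟩, hv, hq1, hq2⟩ := hd
  by_cases he : ξ t = St.cv (St.c (k.val + 1))
  · left
    refine ⟨he, ?_⟩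
    have hst' : mst St ξ (t + 1) = Sum.inr (Sum.inl (knx St k, A.owner (ξ t))) := by
      rw [mst_succ, hst, mup_C_end St k j _ he]
    have hv' : ξ (t + 1) = St.cv (St.c (k.val + 1) + 1) := by
      rw [hfolall t, hst, mnxt_C_end St k j _ he]
    by_cases hkn : k.val + 1 < n
    · have hkx : (knx St k).val = k.val + 1 := Nat.mod_eq_of_lt hkn
      refine ⟨St.c (k.val + 1) + 1, ⟨_, hst'⟩, hv', ?_, ?_⟩
      · rw [hkx]; omega
      · rw [hkx]
        have := St.hcm (k.val + 1) hkn
        show St.c (k.val + 1) + 1 ≤ St.c (k.val + 1 + 1)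
        omega
    · have hkn' : k.val + 1 = n := by have := k.isLt; omega
      have hkx : (knx St k).val = 0 := by
        show (k.val + 1) % n = 0
        rw [hkn', Nat.mod_self]
      have hv'' : ξ (t + 1) = St.cv (St.c 0 + 1) := by
        rw [hv']
        rw [hkn']
        exact St.hper 1
      refine ⟨St.c 0 + 1, ⟨_, hst'⟩, hv'', ?_, ?_⟩
      · rw [hkx]; omega
      · rw [hkx]
        have := St.hcm 0 St.hn
        show St.c 0 + 1 ≤ St.c (0 + 1)
        omega
  · right
    refine ⟨he, ?_⟩
    have hqlt : q < St.c (k.val + 1) := by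
      rcases Nat.lt_or_ge q (St.c (k.val + 1)) with h | h
      · exact h
      · have : q = St.c (k.val + 1) := by omega
        rw [this] at hv
        exact absurd hv he
    have hw : inWin St k.val (ξ t) := ⟨q, hq1, hqlt, hv.symm⟩
    obtain ⟨hp1, hp2, hp3, hp4⟩ := posL_spec St hw
    have hqle : q ≤ posL St k.val (ξ t) := hp4 q hq1 hqlt hv.symm
    refine ⟨posL St k.val (ξ t) + 1, by omega, by omega, ⟨A.owner (ξ t), ?_⟩, ?_, by omega, by omega⟩
    · rw [mst_succ, hst, mup_C_in St k j _ he hw]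
    · rw [hfolall t, hst, mnxt_C_in St k j _ he hw]

theorem dat_reach : ∀ (d t : ℕ) (k : Fin n) (q : ℕ), Dat St ξ t k q →
    St.c (k.val + 1) - q ≤ d →
    ∃ t', t ≤ t' ∧ ξ t' = St.cv (St.c (k.val + 1)) ∧ ∃ q', Dat St ξ (t' + 1) (knx St k) q' := by
  intro d
  induction d with
  | zero =>
    intro t k q hd hle
    rcases dat_step St ξ hξ0 hfolall hd with ⟨he, hq'⟩ | ⟨_, q', hlt, hle', _⟩
    · exact ⟨t, le_refl _, he, hq'⟩
    · omega
  | succ d ih =>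
    intro t k q hd hle
    rcases dat_step St ξ hξ0 hfolall hd with ⟨he, hq'⟩ | ⟨_, q', hlt, hle', hd'⟩
    · exact ⟨t, le_refl _, he, hq'⟩
    · obtain ⟨t', ht', h2, h3⟩ := ih (t + 1) k q' hd' (by omega)
      exact ⟨t', by omega, h2, h3⟩

theorem dat_iter : ∀ (m t : ℕ) (k : Fin n) (q : ℕ), Dat St ξ t k q →
    ∃ t', t ≤ t' ∧ ξ t' = St.cv (St.c ((k.val + 1 + m) % n)) := by
  intro m
  induction m with
  | zero =>
    intro t k q hd
    obtain ⟨t', ht', hv, _⟩ := dat_reach St ξ hξ0 hfolall (St.c (k.val + 1) - q) t k q hd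
      (le_refl _)
    refine ⟨t', ht', ?_⟩
    by_cases hkn : k.val + 1 < n
    · rw [show k.val + 1 + 0 = k.val + 1 from by omega, Nat.mod_eq_of_lt hkn]
      exact hv
    · have hkn' : k.val + 1 = n := by have := k.isLt; omega
      rw [show k.val + 1 + 0 = k.val + 1 from by omega, hkn', Nat.mod_self]
      calc ξ t' = St.cv (St.c (k.val + 1)) := hv
        _ = St.cv (St.c n) := by rw [hkn']
        _ = St.cv (St.c 0) := by
            have h0 := St.hper 0
            simpa using h0
  | succ m ih =>
    intro t k q hd
    obtain ⟨t', ht', _, q', hd'⟩ := dat_reach St ξ hξ0 hfolall (St.c (k.val + 1) - q) t k q hd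
      (le_refl _)
    obtain ⟨t'', ht'', hv'⟩ := ih (t' + 1) (knx St k) q' hd'
    refine ⟨t'', by omega, ?_⟩
    have heq : ((knx St k).val + 1 + m) % n = (k.val + 1 + (m + 1)) % n := by
      have h1 : (knx St k).val = (k.val + 1) % n := rfl
      rw [h1, show (k.val + 1) % n + 1 + m = (k.val + 1) % n + (1 + m) from by omega,
        Nat.mod_add_mod, show k.val + 1 + (1 + m) = k.val + 1 + (m + 1) from by omega]
    rw [← heq]
    exact hv'

theorem posinv : ∀ t, St.a + 1 ≤ t → ∃ (k : Fin n) (q : ℕ), Dat St ξ t k q := by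
  intro t
  induction t with
  | zero => omega
  | succ t ih =>
    intro ht
    by_cases hta : St.a + 1 ≤ t
    · obtain ⟨k, q, hd⟩ := ih hta
      rcases dat_step St ξ hξ0 hfolall hd with ⟨_, q', hd'⟩ | ⟨_, q', _, _, hd'⟩
      · exact ⟨_, q', hd'⟩
      · exact ⟨_, q', hd'⟩
    · have hta' : t = St.a := by omega
      subst hta'
      exact ⟨_, _, dat_start St ξ hξ0 hfolall⟩

theorem honest_visits (k' : Fin n) (t0 : ℕ) :
    ∃ t, t0 ≤ t ∧ ξ t = St.cv (St.c k'.val) := by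
  obtain ⟨k, q, hd⟩ := posinv St ξ hξ0 hfolall (max t0 (St.a + 1)) (le_max_right _ _)
  have hdm := Nat.div_add_mod (k.val + 1) n
  set r := (k.val + 1) % n with hr_def
  have hr : r < n := Nat.mod_lt _ St.hn
  set m := n + k'.val - r with hm_def
  have hkey : k.val + 1 + m = k'.val + (n * ((k.val + 1) / n) + n) := by omega
  have hmod : (k.val + 1 + m) % n = k'.val := by
    rw [hkey, show n * ((k.val + 1) / n) + n = ((k.val + 1) / n + 1) * n from by ring,
      Nat.add_mul_mod_self_right]
    exact Nat.mod_eq_of_lt k'.isLt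
  obtain ⟨t, ht, hv⟩ := dat_iter St ξ hξ0 hfolall m _ k q hd
  rw [hmod] at hv
  exact ⟨t, le_trans (le_max_left _ _) ht, hv⟩

theorem honest_sat : satBuchi T ξ = S := by
  ext i
  constructor
  · intro hi
    by_contra hc
    obtain ⟨kk, hk1, hk2⟩ := hi (St.a + 1)
    obtain ⟨k, q, hd⟩ := posinv St ξ hξ0 hfolall kk hk1
    exact St.havoid i hc q (hd.2.1 ▸ hk2)
  · intro hi j
    obtain ⟨t, ht, hv⟩ := honest_visits St ξ hξ0 hfolall i j
    exact ⟨t, ht, by rw [hv]; exact St.hanch i hi⟩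

end Honest

section Package

variable (St : Setup A T S v0)

theorem prof_outcome_folall :
    ∀ t, outcome A (prof St) v0 (t + 1)
      = mnxt St (mst St (outcome A (prof St) v0) t) (outcome A (prof St) v0 t) :=
  fun t => outcome_succ A (prof St) v0 t

theorem prof_sat : satBuchi T (outcome A (prof St) v0) = S :=
  honest_sat St (outcome A (prof St) v0) rfl (prof_outcome_folall St)

theorem prof_NE : A.IsNEObj (fun i => BuchiObj (T i)) (prof St) v0 := by
  intro i τ hdevB
  by_cases hiS : i ∈ S
  · have h := prof_sat St
    have : i ∈ satBuchi T (outcome A (prof St) v0) := by rw [h]; exact hiS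
    exact this
  · exfalso
    set ξ := outcome A (Function.update (prof St) i τ) v0 with hξ
    have hfol : ∀ t, A.owner (ξ t) ≠ i → ξ (t + 1) = mnxt St (mst St ξ t) (ξ t) := by
      intro t h
      have h2 := outcome_succ A (Function.update (prof St) i τ) v0 t
      rw [Function.update_of_ne h] at h2
      exact h2
    exact deviation St ξ i hiS rfl (isPlay_outcome A _ v0) hfol hdevB

theorem prof_mem (i : Fin n) :
    HasMemorySize (prof St i) (St.a + 1 + (n * n + n)) := by
  refine ⟨MSt n St.a, ⟨minit St, mup St, mnxt St, fun m v => mnxt_valid St m v⟩,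
    inferInstance, ?_, fun h v => rfl⟩
  have hcard : Nat.card (MSt n St.a) = (St.a + 1) + (n * n + n) := by
    show Nat.card (Fin (St.a + 1) ⊕ (Fin n × Fin n) ⊕ Fin n) = _
    rw [Nat.card_sum, Nat.card_sum, Nat.card_prod]
    simp [Nat.card_eq_fintype_card]
  omega

theorem prof_fm (i : Fin n) : FiniteMemory (prof St i) :=
  ⟨MSt n St.a, ⟨minit St, mup St, mnxt St, fun m v => mnxt_valid St m v⟩,
    inferInstance, fun h v => rfl⟩

end Package

end Machine
end Arena
namespace Arena

variable {V : Type} {n : ℕ}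

theorem pref_length (π : ℕ → V) (t : ℕ) : (pref π t).length = t := by
  simp [pref]

theorem pref_congr {π π' : ℕ → V} (t : ℕ) (h : ∀ u, u < t → π u = π' u) :
    pref π t = pref π' t := by
  unfold pref
  apply List.map_congr_left
  intro u hu
  exact h u (List.mem_range.mp hu)

/-- If a deviation of a losing player `i` can move from a vertex of the equilibrium
play to `u'`, then `u'` lies in the coalition's co-Büchi winning region. -/
theorem ne_transfer (A : Arena V n) (T : Fin n → Set V) (v0 : V)
    (σ' : Fin n → A.Strategy) (hNE : A.IsNEObj (fun i => BuchiObj (T i)) σ' v0)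
    (i : Fin n) (hi : outcome A σ' v0 ∉ BuchiObj (T i))
    (m : ℕ) (u' : V) (hown : A.owner (outcome A σ' v0 m) = i)
    (hE : A.E (outcome A σ' v0 m) u') :
    u' ∈ Punish.Wwin A i (T i) := by
  classical
  by_contra hu
  set π' : ℕ → V := outcome A σ' v0 with hπ'
  set H0 : List V := pref π' (m + 1) with hH0
  set f : List V → V → V := fun h v => (σ' (A.owner v)).next (H0 ++ h) v with hfdef
  have hfval : ∀ h v, A.E v (f h v) := fun h v => (σ' _).valid _ _
  obtain ⟨χ, hχ0, hχp, hχcons, hχB⟩ := Punish.complete_of_not_mem_W A i (T i) hu f hfval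
  set χf : ℕ → V := fun t => if t ≤ m then π' t else χ (t - (m + 1)) with hχfdef
  have hχf_le : ∀ t, t ≤ m → χf t = π' t := by
    intro t ht; simp only [hχfdef, if_pos ht]
  have hχf_gt : ∀ t, m < t → χf t = χ (t - (m + 1)) := by
    intro t ht; simp only [hχfdef, if_neg (by omega : ¬ t ≤ m)]
  have hχfm1 : χf (m + 1) = u' := by
    rw [hχf_gt (m + 1) (by omega), show m + 1 - (m + 1) = 0 from by omega, hχ0]
  have hχfp : A.IsPlay χf := by
    intro t
    rcases Nat.lt_or_ge t m with h | h
    · rw [hχf_le t (by omega), hχf_le (t + 1) (by omega)]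
      exact isPlay_outcome A σ' v0 t
    · rcases Nat.eq_or_lt_of_le h with h' | h'
      · rw [hχf_le t (by omega), ← h', hχfm1]
        exact hE
      · rw [hχf_gt t h', hχf_gt (t + 1) (by omega),
          show t + 1 - (m + 1) = (t - (m + 1)) + 1 from by omega]
        exact hχp _
  set τ' : A.Strategy := ⟨fun h v =>
      if h = pref χf h.length ∧ v = χf h.length then χf (h.length + 1)
      else Classical.choose (A.no_deadlock v), by
    intro h v
    show A.E v (if h = pref χf h.length ∧ v = χf h.length then χf (h.length + 1)
      else Classical.choose (A.no_deadlock v))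
    split
    · next hc =>
      rw [hc.2]
      exact hχfp h.length
    · exact Classical.choose_spec (A.no_deadlock v)⟩ with hτ'def
  have hsplitL : ∀ s, pref χf (m + 1 + s) = H0 ++ pref χ s := by
    intro s
    induction s with
    | zero =>
      rw [show m + 1 + 0 = m + 1 from rfl,
        show pref χ 0 = ([] : List V) from rfl, List.append_nil]
      exact pref_congr (m + 1) (fun u hu => hχf_le u (by omega))
    | succ s ih =>
      have hcs : χf (m + 1 + s) = χ s := by
        rw [hχf_gt (m + 1 + s) (by omega), show m + 1 + s - (m + 1) = s from by omega]
      rw [show m + 1 + (s + 1) = (m + 1 + s) + 1 from rfl, pref_succ, ih, hcs, pref_succ,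
        List.append_assoc]
  have hout : ∀ t, ∀ u, u ≤ t → outcome A (Function.update σ' i τ') v0 u = χf u := by
    intro t
    induction t with
    | zero =>
      intro u hu
      have hu0 : u = 0 := by omega
      subst hu0
      rw [hχf_le 0 (by omega)]
      rfl
    | succ t ih =>
      intro u hu
      rcases Nat.lt_or_ge u (t + 1) with h | h
      · exact ih u (by omega)
      · have hu' : u = t + 1 := by omega
        subst hu'
        have hpr : pref (outcome A (Function.update σ' i τ') v0) t = pref χf t :=
          pref_congr t (fun u hu => ih u (by omega))
        rw [outcome_succ A (Function.update σ' i τ') v0 t, ih t (le_refl _), hpr]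
        by_cases how : A.owner (χf t) = i
        · rw [how, Function.update_self]
          show (if pref χf t = pref χf (pref χf t).length ∧ χf t = χf (pref χf t).length
              then χf ((pref χf t).length + 1)
              else Classical.choose (A.no_deadlock (χf t))) = χf (t + 1)
          rw [pref_length χf t, if_pos ⟨rfl, rfl⟩]
        · rw [Function.update_of_ne how]
          rcases Nat.lt_or_ge t m with h1 | h1
          · have e1 : χf t = π' t := hχf_le t (by omega)
            have e2 : pref χf t = pref π' t := pref_congr t (fun u hu => hχf_le u (by omega))
            rw [e1, e2, hχf_le (t + 1) (by omega)]
            exact (outcome_succ A σ' v0 t).symm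
          · rcases Nat.eq_or_lt_of_le h1 with h2 | h2
            · exfalso
              apply how
              rw [hχf_le t (by omega), ← h2]
              exact hown
            · have hs : t = m + 1 + (t - (m + 1)) := by omega
              have e1 : χf t = χ (t - (m + 1)) := hχf_gt t h2
              have hocons : A.owner (χ (t - (m + 1))) ≠ i := by rw [← e1]; exact how
              have hstep := hχcons (t - (m + 1)) hocons
              have e3 : pref χf t = H0 ++ pref χ (t - (m + 1)) := by
                conv_lhs => rw [hs]
                exact hsplitL (t - (m + 1))
              rw [e1, e3, hχf_gt (t + 1) (by omega),
                show t + 1 - (m + 1) = (t - (m + 1)) + 1 from by omega, hstep]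
  have houteq : outcome A (Function.update σ' i τ') v0 = χf :=
    funext (fun t => hout t t (le_refl _))
  have hχfB : χf ∈ BuchiObj (T i) := by
    intro j
    obtain ⟨k, hk1, hk2⟩ := hχB j
    refine ⟨m + 1 + k, by omega, ?_⟩
    rw [hχf_gt (m + 1 + k) (by omega), show m + 1 + k - (m + 1) = k from by omega]
    exact hk2
  exact hi (hNE i τ' (by rw [houteq]; exact hχfB))

end Arena


open Arena

/-- From any NE in a Büchi game whose outcome has an infinitely
occurring vertex, one can derive a finite-memory NE with the same set of
satisfied objectives; with memory size at most `|V| + n² + n` if the arena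
is finite. -/
theorem buchi_fm_ne_lasso
    (V : Type) (n : ℕ) (A : Arena V n) (T : Fin n → Set V) (v0 : V)
    (σ' : Fin n → A.Strategy)
    (hNE : A.IsNEObj (fun i => BuchiObj (T i)) σ' v0)
    (hinf : ∃ v, ∀ j, ∃ k, j ≤ k ∧ outcome A σ' v0 k = v) :
    (∃ σ : Fin n → A.Strategy,
      A.IsNEObj (fun i => BuchiObj (T i)) σ v0 ∧
      satBuchi T (outcome A σ v0) = satBuchi T (outcome A σ' v0) ∧
      ∀ i, FiniteMemory (σ i)) ∧
    (Finite V →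
      ∃ σ : Fin n → A.Strategy,
        A.IsNEObj (fun i => BuchiObj (T i)) σ v0 ∧
        satBuchi T (outcome A σ v0) = satBuchi T (outcome A σ' v0) ∧
        ∀ i, HasMemorySize (σ i) (Nat.card V + n ^ 2 + n)) := by
  classical
  have hn : 0 < n := (A.owner v0).pos
  set π' : ℕ → V := outcome A σ' v0 with hπ'
  set S : Set (Fin n) := satBuchi T π' with hSdef
  obtain ⟨vstar, hvstar⟩ := hinf
  have hJex : ∀ i : Fin n, i ∉ S → ∃ J, ∀ k, J ≤ k → π' k ∉ T i := by
    intro i hi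
    by_contra hc
    push_neg at hc
    exact hi (fun j => hc j)
  set Jf : Fin n → ℕ := fun i => if h : i ∉ S then Classical.choose (hJex i h) else 0
    with hJfdef
  have hJf : ∀ i : Fin n, i ∉ S → ∀ k, Jf i ≤ k → π' k ∉ T i := by
    intro i hi k hk
    have he : Jf i = Classical.choose (hJex i hi) := by simp only [hJfdef, dif_pos hi]
    exact Classical.choose_spec (hJex i hi) k (by rw [← he]; exact hk)
  set J : ℕ := Finset.univ.sup Jf with hJdef
  have hJ : ∀ i : Fin n, i ∉ S → ∀ k, J ≤ k → π' k ∉ T i := by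
    intro i hi k hk
    exact hJf i hi k (le_trans (Finset.le_sup (Finset.mem_univ i)) hk)
  obtain ⟨a', hJa', ha'⟩ := hvstar J
  have hnext : ∀ (i : Fin n), i ∈ S → ∀ p : ℕ, ∃ o, p < o ∧ π' o ∈ T i := by
    intro i hi p
    obtain ⟨k, hk1, hk2⟩ := hi (p + 1)
    exact ⟨k, by omega, hk2⟩
  set np : Fin n → ℕ → ℕ :=
    fun i p => if h : i ∈ S then Classical.choose (hnext i h p) else p + 1 with hnpdef
  have hnp1 : ∀ i p, p < np i p := by
    intro i p
    by_cases h : i ∈ S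
    · have he : np i p = Classical.choose (hnext i h p) := by simp only [hnpdef, dif_pos h]
      rw [he]
      exact (Classical.choose_spec (hnext i h p)).1
    · have he : np i p = p + 1 := by simp only [hnpdef, dif_neg h]
      omega
  have hnp2 : ∀ i p, i ∈ S → π' (np i p) ∈ T i := by
    intro i p h
    have he : np i p = Classical.choose (hnext i h p) := by simp only [hnpdef, dif_pos h]
    rw [he]
    exact (Classical.choose_spec (hnext i h p)).2
  set d : ℕ → ℕ := fun k => Nat.rec (np ⟨0, hn⟩ a')
    (fun k ih => if h : k + 1 < n then np ⟨k + 1, h⟩ ih else ih + 1) k with hddef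
  have hd0 : d 0 = np ⟨0, hn⟩ a' := rfl
  have hdsucc : ∀ k, d (k + 1) = if h : k + 1 < n then np ⟨k + 1, h⟩ (d k) else d k + 1 :=
    fun k => rfl
  have hdmono : ∀ k, d k < d (k + 1) := by
    intro k
    rw [hdsucc]
    by_cases h : k + 1 < n
    · rw [dif_pos h]; exact hnp1 _ _
    · rw [dif_neg h]; omega
  have hda' : ∀ k, a' < d k := by
    intro k
    induction k with
    | zero => rw [hd0]; exact hnp1 _ _
    | succ k ih => have := hdmono k; omega
  have hdle : ∀ k k', k ≤ k' → d k ≤ d k' := by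
    intro k k' hk
    induction k' with
    | zero =>
      have h0 : k = 0 := by omega
      subst h0; exact le_refl _
    | succ k' ih =>
      rcases Nat.lt_or_ge k (k' + 1) with h | h
      · have h1 := hdmono k'
        have h2 := ih (by omega)
        omega
      · have h0 : k = k' + 1 := by omega
        subst h0; exact le_refl _
  have hdT : ∀ i : Fin n, i ∈ S → π' (d i.val) ∈ T i := by
    intro i hi
    rcases hiv : i.val with _ | k
    · have hieq : i = ⟨0, hn⟩ := Fin.ext hiv
      rw [hieq] at hi
      rw [hd0, hieq]
      exact hnp2 _ _ hi
    · have hlt : k + 1 < n := by rw [← hiv]; exact i.isLt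
      have hieq : i = ⟨k + 1, hlt⟩ := Fin.ext hiv
      rw [hieq] at hi
      rw [hdsucc k, dif_pos hlt, hieq]
      exact hnp2 _ _ hi
  obtain ⟨b', hb'1, hb'2⟩ := hvstar (d (n - 1) + 1)
  have hdb' : ∀ k, k < n → d k < b' := by
    intro k hk
    have h1 : d k ≤ d (n - 1) := hdle k (n - 1) (by omega)
    omega
  have hab' : a' < b' := by
    have h1 := hda' (n - 1)
    omega
  set Lc : ℕ := b' - a' with hLcdef
  have hLcpos : 0 < Lc := by omega
  set cv : ℕ → V := fun q => π' (a' + q % Lc) with hcvdef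
  set c : ℕ → ℕ := fun k => if k < n then d k - a' else Lc + (d 0 - a') with hcdef
  have hck : ∀ k, k < n → c k = d k - a' := fun k hk => by simp only [hcdef, if_pos hk]
  have hcn : c n = Lc + (d 0 - a') := by simp only [hcdef, if_neg (lt_irrefl n)]
  obtain ⟨a, pv, haa, hpv0', hpva', hpve', hpvsub, hpvinj⟩ :=
    compressWalk A (d 0) π' (fun q _ => isPlay_outcome A σ' v0 q)
  have hcv_eq : ∀ q, q < Lc → cv q = π' (a' + q) := by
    intro q hq
    simp only [hcvdef]
    rw [Nat.mod_eq_of_lt hq]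
  have hcv_per : ∀ x, cv (Lc + x) = cv x := by
    intro x
    simp only [hcvdef]
    rw [Nat.add_mod_left]
  have hcv_edge : ∀ q, A.E (cv q) (cv (q + 1)) := by
    intro q
    have hr : q % Lc < Lc := Nat.mod_lt _ hLcpos
    have hdm := Nat.div_add_mod q Lc
    by_cases hcase : q % Lc + 1 < Lc
    · have h1 : (q + 1) % Lc = q % Lc + 1 := by
        have he : q + 1 = (q % Lc + 1) + Lc * (q / Lc) := by omega
        rw [he, Nat.add_mul_mod_self_left, Nat.mod_eq_of_lt hcase]
      simp only [hcvdef]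
      rw [h1, show a' + (q % Lc + 1) = a' + q % Lc + 1 from by omega]
      exact isPlay_outcome A σ' v0 _
    · have h1 : (q + 1) % Lc = 0 := by
        have hmul : Lc * (q / Lc + 1) = Lc * (q / Lc) + Lc := by ring
        have he : q + 1 = 0 + Lc * (q / Lc + 1) := by omega
        rw [he, Nat.add_mul_mod_self_left, Nat.zero_mod]
      simp only [hcvdef]
      rw [h1, Nat.add_zero]
      have h2 : a' + q % Lc + 1 = b' := by omega
      have h3 := isPlay_outcome A σ' v0 (a' + q % Lc)
      rw [h2] at h3
      rw [ha', ← hb'2]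
      exact h3
  have hpva : pv a = cv (c 0) := by
    rw [hpva', hck 0 hn,
      hcv_eq (d 0 - a') (by have h1 := hda' 0; have h2 := hdb' 0 hn; omega)]
    congr 1
    have h1 := hda' 0
    omega
  have hper : ∀ q, cv (c n + q) = cv (c 0 + q) := by
    intro q
    rw [hcn, hck 0 hn, show Lc + (d 0 - a') + q = Lc + ((d 0 - a') + q) from by omega]
    exact hcv_per _
  have hcm : ∀ k, k < n → c k < c (k + 1) := by
    intro k hk
    by_cases h : k + 1 < n
    · rw [hck k hk, hck (k + 1) h]
      have h1 := hdmono k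
      have h2 := hda' k
      omega
    · have hk1 : k + 1 = n := by omega
      rw [hck k hk, hk1, hcn]
      have h1 := hda' k
      have h2 := hdb' k hk
      have h3 := hda' 0
      omega
  have hanch : ∀ i : Fin n, i ∈ S → cv (c i.val) ∈ T i := by
    intro i hi
    rw [hck i.val i.isLt,
      hcv_eq _ (by have h1 := hda' i.val; have h2 := hdb' i.val i.isLt; omega),
      show a' + (d i.val - a') = d i.val from by have h1 := hda' i.val; omega]
    exact hdT i hi
  have havoid : ∀ i : Fin n, i ∉ S → ∀ q, cv q ∉ T i := by
    intro i hi q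
    simp only [hcvdef]
    exact hJ i hi _ (by omega)
  have hiBuchi : ∀ i : Fin n, i ∉ S → π' ∉ BuchiObj (T i) := fun i hi hB => hi hB
  have hdev : ∀ i : Fin n, i ∉ S → ∀ v u', ((∃ m, m ≤ a ∧ pv m = v) ∨ (∃ m, cv m = v)) →
      A.owner v = i → A.E v u' → u' ∈ Punish.Wwin A i (T i) := by
    intro i hi v u' horig hown hE
    rcases horig with ⟨m, hm, hpvm⟩ | ⟨m, hcvm⟩
    · obtain ⟨m0, _, hrep⟩ := hpvsub m hm
      have hv : v = π' m0 := by rw [← hpvm, hrep]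
      apply ne_transfer A T v0 σ' hNE i (hiBuchi i hi) m0 u'
      · show A.owner (π' m0) = i
        rw [← hv]; exact hown
      · show A.E (π' m0) u'
        rw [← hv]; exact hE
    · have hv : v = π' (a' + m % Lc) := by rw [← hcvm]
      apply ne_transfer A T v0 σ' hNE i (hiBuchi i hi) (a' + m % Lc) u'
      · show A.owner (π' (a' + m % Lc)) = i
        rw [← hv]; exact hown
      · show A.E (π' (a' + m % Lc)) u'
        rw [← hv]; exact hE
  let Stp : Machine.Setup A T S v0 :=
    { a := a, pv := pv, cv := cv, c := c,
      pun := fun i => Punish.pstrat A i (T i),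
      Wb := fun i => Punish.Wwin A i (T i),
      hn := hn,
      hpv0 := hpv0'.trans rfl,
      hpve := hpve',
      hpva := hpva,
      hcve := hcv_edge,
      hper := hper,
      hcm := hcm,
      hanch := hanch,
      havoid := havoid,
      hpinj := hpvinj,
      hWsound := fun i _ χ hp h0 hf => Punish.pstrat_sound A i (T i) χ hp h0 hf,
      hdev := hdev,
      hpun := fun i v => Punish.pstrat_valid A i (T i) v }
  constructor
  · exact ⟨Machine.prof Stp, Machine.prof_NE Stp,
      by rw [Machine.prof_sat Stp, hSdef, hπ'], fun i => Machine.prof_fm Stp i⟩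
  · intro hfinV
    refine ⟨Machine.prof Stp, Machine.prof_NE Stp,
      by rw [Machine.prof_sat Stp, hSdef, hπ'], ?_⟩
    intro i
    obtain ⟨M, mm, hfinM, hle, hind⟩ := Machine.prof_mem Stp i
    refine ⟨M, mm, hfinM, ?_, hind⟩
    have hcard : a + 1 ≤ Nat.card V := by
      have hinj : Function.Injective (fun q : Fin (a + 1) => pv q.val) := by
        intro q q' hq
        exact Fin.ext (hpvinj q.val q'.val (by have := q.isLt; omega)
          (by have := q'.isLt; omega) hq)
      have h2 := Nat.card_le_card_of_injective _ hinj
      simpa [Nat.card_eq_fintype_card] using h2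
    have hsq : n ^ 2 = n * n := by ring
    have hSa : Stp.a = a := rfl
    rw [hSa] at hle
    rw [hsq]
    omega
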